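/- arXiv:1412.0371 — 3 statements merged into one kernel-verified Lean document; each statement's English description precedes it below -/
import Mathlib

section
/- The period of a tableau is unique, and any two tableaux representing the same combinatorial type have the same periodicity. -/
/- Common framework: arrangements of convex bodies in the plane, dual support
systems on the cylinder, swap pairs and combinatorial types, following
Dobbins–Holmsen–Hubard, "Realization spaces of arrangements of convex bodies". -/

open scoped Classical

noncomputable section

namespace RealBody

/-! ### Points, order types -/

/-- Twice the signed area of the triangle `p q r`; its sign is the orientation. -/
def ptOrient (p q r : ℝ × ℝ) : ℝ :=
  (q.1 - p.1) * (r.2 - p.2) - (q.2 - p.2) * (r.1 - p.1)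

/-- The order type of an indexed planar point family. -/
def orderTypeOf {ι : Type*} (P : ι → ℝ × ℝ) : ι → ι → ι → SignType :=
  fun a b c => SignType.sign (ptOrient (P a) (P b) (P c))

/-- The axioms of a rank-3 acyclic chirotope (an abstract order type):
nontrivial, alternating, the Grassmann-Plücker exchange relations, acyclic. -/
structure IsOrderType {ι : Type*} (χ : ι → ι → ι → SignType) : Prop where
  nontrivial : ∃ a b c, χ a b c ≠ 0
  alt₁ : ∀ a b c, χ b a c = -χ a b c
  alt₂ : ∀ a b c, χ a c b = -χ a b c
  exchange : ∀ a b c d e, χ a b c * χ a d e = 1 →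
    χ a b d * χ a c e = 1 ∨ χ a b e * χ a d c = 1
  acyclic : ∀ a b c d, ¬(0 ≤ χ b c d ∧ χ a c d ≤ 0 ∧ 0 ≤ χ a b d ∧ χ a b c ≤ 0 ∧
    (χ b c d ≠ 0 ∨ χ a c d ≠ 0 ∨ χ a b d ≠ 0 ∨ χ a b c ≠ 0))

/-- A simple order type: a uniform (nowhere zero on distinct triples) acyclic
rank-3 chirotope. -/
def IsSimpleOrderType {ι : Type*} (χ : ι → ι → ι → SignType) : Prop :=
  IsOrderType χ ∧ ∀ a b c : ι, a ≠ b → a ≠ c → b ≠ c → χ a b c ≠ 0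

/-! ### Support functions and arrangements -/

/-- The support function of a planar set, as a (2π-periodic) function of the
angle `θ` parametrizing the unit circle: `h_A(θ) = sup_{p ∈ A} ⟨(cos θ, sin θ), p⟩`. -/
def suppFn (A : Set (ℝ × ℝ)) (θ : ℝ) : ℝ :=
  sSup ((fun p : ℝ × ℝ => p.1 * Real.cos θ + p.2 * Real.sin θ) '' A)

/-- Two functions (of the circle parameter) cross at `θ`: they agree at `θ` and
their difference changes sign there, with `θ` an isolated coincidence. -/
def CrossesAt (g h : ℝ → ℝ) (θ : ℝ) : Prop :=
  g θ = h θ ∧ ∃ ε > 0, ∀ s ∈ Set.Ioo (θ - ε) θ, ∀ t ∈ Set.Ioo θ (θ + ε),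
    (g s - h s) * (g t - h t) < 0

/-- The crossing points (in the fundamental domain `(0, 2π] × ℝ` of the cylinder)
of an indexed family of curves given as graphs of functions.  For an arrangement
these are the common supporting tangents of pairs of bodies. -/
def crossings {L : Type*} (f : L → ℝ → ℝ) : Set (ℝ × ℝ) :=
  {p | p.1 ∈ Set.Ioc 0 (2 * Real.pi) ∧ ∃ i j : L, i ≠ j ∧ f i p.1 = p.2 ∧ f j p.1 = p.2}

/-- An arrangement of convex bodies: a finite nonempty indexed family of compact
convex sets in the plane such that (in dual terms) each pair of support curves
crosses at each point of intersection, no three support curves meet, and there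
are finitely many crossings (common supporting tangents). -/
structure Arrangement (L : Type*) [Fintype L] where
  nonemptyIdx : Nonempty L
  body : L → Set (ℝ × ℝ)
  isCompact : ∀ i, IsCompact (body i)
  convex : ∀ i, Convex ℝ (body i)
  nonempty : ∀ i, (body i).Nonempty
  transversal : ∀ i j, i ≠ j → ∀ θ : ℝ, suppFn (body i) θ = suppFn (body j) θ →
    CrossesAt (suppFn (body i)) (suppFn (body j)) θ
  noTriple : ∀ i j k : L, i ≠ j → i ≠ k → j ≠ k → ∀ θ : ℝ,
    ¬(suppFn (body i) θ = suppFn (body j) θ ∧ suppFn (body i) θ = suppFn (body k) θ)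
  finTangents : (crossings fun i => suppFn (body i)).Finite

/-- The dual support curve of a body, drawn on the cylinder `S¹ × ℝ`. -/
def dualCurve (A : Set (ℝ × ℝ)) : Set (Real.Angle × ℝ) :=
  {q | ∃ x : ℝ, q = ((x : Real.Angle), suppFn A x)}

/-! ### Swap pairs and combinatorial types -/

/-- The adjacent transposition of positions `i` and `i+1` (0-based) in `Fin n`
(the identity if out of range); its paper height is `i+1`. -/
def adjSwap (n i : ℕ) : Equiv.Perm (Fin n) :=
  if h : i + 1 < n then Equiv.swap ⟨i, Nat.lt_of_succ_lt h⟩ ⟨i + 1, h⟩ else 1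

/-- A swap pair on the index set `L`: a bijection `ρ : [n] → L` together with a
swap sequence, i.e. a finite sequence of adjacent transpositions (recorded by
their 0-based heights) whose composite is the identity permutation. -/
structure SwapPair (L : Type*) [Fintype L] where
  ρ : Fin (Fintype.card L) ≃ L
  heights : List ℕ
  heights_lt : ∀ h ∈ heights, h + 1 < Fintype.card L
  prod_eq_one : (heights.map (adjSwap (Fintype.card L))).prod = 1

/-- The elementary operations on swap pairs: a cyclic shift, and an independent
transposition of consecutive swaps whose heights differ by more than one. -/
def ElemMove {L : Type*} [Fintype L] (P Q : SwapPair L) : Prop :=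
  (∃ h rest, P.heights = h :: rest ∧ Q.heights = rest ++ [h] ∧
    Q.ρ = (adjSwap (Fintype.card L) h).trans P.ρ) ∨
  (∃ pre h₁ h₂ post, (h₁ + 1 < h₂ ∨ h₂ + 1 < h₁) ∧
    P.heights = pre ++ h₁ :: h₂ :: post ∧ Q.heights = pre ++ h₂ :: h₁ :: post ∧
    Q.ρ = P.ρ)

/-- Equivalence of swap pairs: generated by the elementary operations. -/
def SwapEquiv {L : Type*} [Fintype L] : SwapPair L → SwapPair L → Prop :=
  Relation.EqvGen ElemMove

def combSetoid (L : Type*) [Fintype L] : Setoid (SwapPair L) :=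
  Relation.EqvGen.setoid ElemMove

/-- A combinatorial type on `L`: an equivalence class of swap pairs. -/
def CombType (L : Type*) [Fintype L] : Type _ := Quotient (combSetoid L)

/-- The combinatorial type of a swap pair. -/
def SwapPair.cls {L : Type*} [Fintype L] (P : SwapPair L) : CombType L :=
  Quotient.mk (combSetoid L) P

/-- `P` is a swap pair obtained by sweeping the system of curves given by the
graphs of `f` once around the cylinder: the crossings are enumerated in
lexicographic order on `(0, 2π] × ℝ`, `ρ` lists the curves from bottom to top
before the first crossing, and the height of the `t`-th swap is one plus the
number of curves below the `t`-th crossing. -/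
def HasSwapPair {L : Type*} [Fintype L] (f : L → ℝ → ℝ) (P : SwapPair L) : Prop :=
  ∃ e : Fin P.heights.length → ℝ × ℝ,
    Function.Injective e ∧ Set.range e = crossings f ∧
    (∀ s t : Fin P.heights.length, s < t → Prod.Lex (· < ·) (· < ·) (e s) (e t)) ∧
    (∀ t : Fin P.heights.length, P.heights.get t = Nat.card {i : L // f i (e t).1 < (e t).2}) ∧
    ∃ θ₀ ∈ Set.Ioc (0 : ℝ) (2 * Real.pi),
      (∀ t : Fin P.heights.length, θ₀ < (e t).1) ∧
      ∀ a b : Fin (Fintype.card L), a < b → f (P.ρ a) θ₀ < f (P.ρ b) θ₀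

/-- `P` is a swap pair of the dual support system of the arrangement `𝒜`. -/
def ArrHasPair {L : Type*} [Fintype L] (𝒜 : Arrangement L) (P : SwapPair L) : Prop :=
  HasSwapPair (fun i => suppFn (𝒜.body i)) P

/-- The combinatorial type of the arrangement `𝒜` is `Ω`. -/
def ArrHasType {L : Type*} [Fintype L] (𝒜 : Arrangement L) (Ω : CombType L) : Prop :=
  ∃ P : SwapPair L, ArrHasPair 𝒜 P ∧ P.cls = Ω

/-- Two arrangements have the same combinatorial type. -/
def SameCombTypeArr {L : Type*} [Fintype L] (𝒜 ℬ : Arrangement L) : Prop :=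
  ∃ P Q : SwapPair L, ArrHasPair 𝒜 P ∧ ArrHasPair ℬ Q ∧ SwapEquiv P Q

/-! ### Restriction, orientability, the order type of an orientable arrangement -/

/-- Restriction (reindexing) of an arrangement along an injection. -/
def Arrangement.restrict {L L' : Type*} [Fintype L] [Fintype L'] (𝒜 : Arrangement L)
    (hne : Nonempty L') (e : L' → L) (he : Function.Injective e) : Arrangement L' where
  nonemptyIdx := hne
  body i := 𝒜.body (e i)
  isCompact i := 𝒜.isCompact (e i)
  convex i := 𝒜.convex (e i)
  nonempty i := 𝒜.nonempty (e i)
  transversal i j hij θ h := 𝒜.transversal (e i) (e j) (fun hh => hij (he hh)) θ h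
  noTriple i j k hij hik hjk θ := 𝒜.noTriple (e i) (e j) (e k)
    (fun hh => hij (he hh)) (fun hh => hik (he hh)) (fun hh => hjk (he hh)) θ
  finTangents := 𝒜.finTangents.subset (by
    rintro p ⟨hp, i, j, hij, h1, h2⟩
    exact ⟨hp, e i, e j, fun hh => hij (he hh), h1, h2⟩)

/-- An arrangement all of whose bodies are single points. -/
def IsPointArr {L : Type*} [Fintype L] (ℬ : Arrangement L) : Prop :=
  ∀ i, ∃ p : ℝ × ℝ, ℬ.body i = {p}

/-- The triple `(i,j,k)` of bodies of `𝒜` is orientable: it has the combinatorial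
type of three generic points. -/
def OrientableTriple {L : Type*} [Fintype L] (𝒜 : Arrangement L) (i j k : L) : Prop :=
  ∃ he : Function.Injective ![i, j, k],
    ∃ ℬ : Arrangement (Fin 3), IsPointArr ℬ ∧
      SameCombTypeArr (𝒜.restrict ⟨0⟩ ![i, j, k] he) ℬ

/-- An orientable arrangement: at least three bodies, every triple orientable. -/
def Orientable {L : Type*} [Fintype L] (𝒜 : Arrangement L) : Prop :=
  3 ≤ Fintype.card L ∧ ∀ i j k : L, i ≠ j → i ≠ k → j ≠ k → OrientableTriple 𝒜 i j k

/-- The support curve of body `a` is strictly on top of those of `b` and `c` at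
angle `θ`; equivalently `a` is the unique body of the triple touching the
boundary of the convex hull of the union at outward normal direction `θ`. -/
def TopAmong {L : Type*} [Fintype L] (𝒜 : Arrangement L) (a b c : L) (θ : ℝ) : Prop :=
  suppFn (𝒜.body b) θ < suppFn (𝒜.body a) θ ∧ suppFn (𝒜.body c) θ < suppFn (𝒜.body a) θ

/-- The ordered triple of bodies `(i,j,k)` is positively (counter-clockwise)
oriented: the three bodies appear in the order `i, j, k` on the boundary of the
convex hull of their union, i.e. their support curves reach the upper envelope
in this cyclic order. -/
def TripleOrientPos {L : Type*} [Fintype L] (𝒜 : Arrangement L) (i j k : L) : Prop :=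
  ∃ θ₁ θ₂ θ₃ : ℝ, θ₁ < θ₂ ∧ θ₂ < θ₃ ∧ θ₃ < θ₁ + 2 * Real.pi ∧
    TopAmong 𝒜 i j k θ₁ ∧ TopAmong 𝒜 j k i θ₂ ∧ TopAmong 𝒜 k i j θ₃

/-- The sign function recording the orientations of the triples of an
arrangement (zero on degenerate triples). -/
def arrChirotope {L : Type*} [Fintype L] (𝒜 : Arrangement L) : L → L → L → SignType :=
  fun i j k =>
    if i = j ∨ i = k ∨ j = k then 0 else if TripleOrientPos 𝒜 i j k then 1 else -1

/-! ### k-gons -/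

/-- A `k`-gon: the convex hull of at most `k` points. -/
def IsKgon (A : Set (ℝ × ℝ)) (k : ℕ) : Prop :=
  ∃ S : Finset (ℝ × ℝ), S.card ≤ k ∧ A = convexHull ℝ (S : Set (ℝ × ℝ))

/-! ### Projective transformations and realization spaces -/

/-- Denominator (third homogeneous coordinate) of the projective transformation
with matrix `M` at the point `p`. -/
def projDen (M : Matrix (Fin 3) (Fin 3) ℝ) (p : ℝ × ℝ) : ℝ :=
  M 2 0 * p.1 + M 2 1 * p.2 + M 2 2

/-- The projective transformation of the plane with homogeneous matrix `M`. -/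
def projAct (M : Matrix (Fin 3) (Fin 3) ℝ) (p : ℝ × ℝ) : ℝ × ℝ :=
  ((M 0 0 * p.1 + M 0 1 * p.2 + M 0 2) / projDen M p,
   (M 1 0 * p.1 + M 1 1 * p.2 + M 1 2) / projDen M p)

/-- The projective transformation with matrix `M` is admissible on `S`: it is
invertible, bounded, and orientation preserving on the convex hull of `S`
(positive Jacobian determinant `det M / (den p)³`). -/
def AdmissibleOn (M : Matrix (Fin 3) (Fin 3) ℝ) (S : Set (ℝ × ℝ)) : Prop :=
  IsUnit M.det ∧ ∀ p ∈ convexHull ℝ S, projDen M p ≠ 0 ∧ 0 < M.det / (projDen M p) ^ 3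

/-- Projective equivalence of arrangements, via an admissible projectivity. -/
def ProjEquivArr {L : Type*} [Fintype L] (𝒜 ℬ : Arrangement L) : Prop :=
  ∃ M : Matrix (Fin 3) (Fin 3) ℝ, AdmissibleOn M (⋃ i, 𝒜.body i) ∧
    ∀ i, projAct M '' 𝒜.body i = ℬ.body i

/-- The space of arrangements, metrized by the maximum over the index set of the
Hausdorff distances between corresponding bodies. -/
instance arrPseudoMetric (L : Type*) [Fintype L] : PseudoMetricSpace (Arrangement L) :=
  PseudoMetricSpace.induced
    (fun 𝒜 (i : L) => (⟨⟨𝒜.body i, 𝒜.isCompact i⟩, 𝒜.nonempty i⟩ :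
      TopologicalSpace.NonemptyCompacts (ℝ × ℝ)))
    inferInstance

/-- The full realization space of a combinatorial type. -/
abbrev RealizationSpace {L : Type*} [Fintype L] (Ω : CombType L) : Type _ :=
  {𝒜 : Arrangement L // ArrHasType 𝒜 Ω}

/-- The (projective) realization space: the full realization space modulo
admissible projectivities. -/
abbrev ProjRealizationSpace {L : Type*} [Fintype L] (Ω : CombType L) : Type _ :=
  Quot (fun A B : RealizationSpace Ω => ProjEquivArr A.1 B.1)

/-- The full `k`-gon realization space of a combinatorial type. -/
abbrev KgonRealizationSpace {L : Type*} [Fintype L] (k : ℕ) (Ω : CombType L) : Type _ :=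
  {𝒜 : Arrangement L // ArrHasType 𝒜 Ω ∧ ∀ i, IsKgon (𝒜.body i) k}

/-- The (projective) `k`-gon realization space. -/
abbrev ProjKgonRealizationSpace {L : Type*} [Fintype L] (k : ℕ) (Ω : CombType L) : Type _ :=
  Quot (fun A B : KgonRealizationSpace k Ω => ProjEquivArr A.1 B.1)

/-! ### Incidence sequences, layers, depth -/

/-- The order of the curves (bottom to top) after the first `t` swaps. -/
def ordAt {L : Type*} [Fintype L] (P : SwapPair L) (t : ℕ) : Fin (Fintype.card L) → L :=
  fun p => P.ρ (((P.heights.take t).map (adjSwap (Fintype.card L))).prod p)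

theorem heights_get_lt {L : Type*} [Fintype L] (P : SwapPair L)
    (t : Fin P.heights.length) : P.heights.get t + 1 < Fintype.card L :=
  P.heights_lt _ (List.get_mem _ _)

/-- First entry of the `t`-th label of the incidence sequence: the curve coming
from above (crossing downward) at the `t`-th crossing. -/
def incFst {L : Type*} [Fintype L] (P : SwapPair L) (t : Fin P.heights.length) : L :=
  ordAt P t.1 ⟨P.heights.get t + 1, heights_get_lt P t⟩

/-- Second entry of the `t`-th label of the incidence sequence: the curve coming
from below (crossing upward) at the `t`-th crossing. -/
def incSnd {L : Type*} [Fintype L] (P : SwapPair L) (t : Fin P.heights.length) : L :=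
  ordAt P t.1 ⟨P.heights.get t, Nat.lt_of_succ_lt (heights_get_lt P t)⟩

/-- The ordered pair `(i,j)` occurs in the incidence sequence of `P`. -/
def IncidentPair {L : Type*} [Fintype L] (P : SwapPair L) (i j : L) : Prop :=
  ∃ t : Fin P.heights.length, incFst P t = i ∧ incSnd P t = j

def Touches {L : Type*} [Fintype L] (P : SwapPair L) (i j : L) : Prop :=
  IncidentPair P i j ∨ IncidentPair P j i

/-- `i` is a non-isolated vertex of the incidence graph. -/
def IsActive {L : Type*} [Fintype L] (P : SwapPair L) (i : L) : Prop :=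
  ∃ j, Touches P i j

/-- Connectivity in the incidence graph (whose components are the layers). -/
def Linked {L : Type*} [Fintype L] (P : SwapPair L) : L → L → Prop :=
  Relation.ReflTransGen (Touches P)

/-- The depth: the number of layers (connected components of the incidence
graph, excluding isolated vertices).  Depth 1 is called non-layered. -/
def Depth {L : Type*} [Fintype L] (P : SwapPair L) : ℕ :=
  Nat.card (Quot fun i j : {i : L // IsActive P i} => Linked P i.1 j.1)

/-! ### Local sequences, tableaux, periods, bumps -/

/-- A tableau on `L`: an ordering of `L` (rows, bottom to top) together with a
list of indices in each row. -/
structure Tableau (L : Type*) [Fintype L] where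
  ρ : Fin (Fintype.card L) ≃ L
  row : L → List L

/-- The local sequence of the index `i`: the indices met by curve `i`, in
sweep order. -/
def localSeq {L : Type*} [Fintype L] (P : SwapPair L) (i : L) : List L :=
  (List.finRange P.heights.length).filterMap fun t =>
    if incFst P t = i then some (incSnd P t)
    else if incSnd P t = i then some (incFst P t) else none

/-- The associated tableau of a swap pair: rows are the local sequences, ordered
by `ρ`. -/
def assocTableau {L : Type*} [Fintype L] (P : SwapPair L) : Tableau L :=
  ⟨P.ρ, localSeq P⟩

/-- `Λ'` is a `p`-th root of `Λ`: `Λ` is the `p`-fold row-wise concatenation of `Λ'`. -/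
def IsPeriodOf {L : Type*} [Fintype L] (Λ' Λ : Tableau L) (p : ℕ) : Prop :=
  Λ'.ρ = Λ.ρ ∧ ∀ i, Λ.row i = (List.replicate p (Λ'.row i)).flatten

/-- The periodicity of a tableau: the largest `p` such that `Λ` is a `p`-fold
concatenation; the corresponding `Λ'` is called the period of `Λ`. -/
def Periodicity {L : Type*} [Fintype L] (Λ : Tableau L) : ℕ :=
  sSup {p : ℕ | ∃ Λ', IsPeriodOf Λ' Λ p}

/-- Bumping the adjacent pair `{j,k}` in the tableau `Λ` produces `Λ'`: the rows
of `j` and `k` begin with each other; these first entries are moved to the ends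
of their rows, and rows `j`, `k` exchange their positions in the row order. -/
def Bump {L : Type*} [Fintype L] (Λ Λ' : Tableau L) (j k : L) : Prop :=
  j ≠ k ∧
  (∃ r, Λ.row j = k :: r ∧ Λ'.row j = r ++ [k]) ∧
  (∃ r, Λ.row k = j :: r ∧ Λ'.row k = r ++ [j]) ∧
  (∀ i, i ≠ j → i ≠ k → Λ'.row i = Λ.row i) ∧
  Λ'.ρ = Λ.ρ.trans (Equiv.swap j k)

def BumpStep {L : Type*} [Fintype L] (Λ Λ' : Tableau L) : Prop :=
  ∃ j k, Bump Λ Λ' j k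

/-! ### Support configurations -/

/-- The pair of bodies `(i,j)` has a common supporting tangent with outward
normal angle `θ` meeting `i` before `j`: dually, the support curve of `i`
crosses that of `j` downward at `θ`. -/
def DownCrossAt {L : Type*} [Fintype L] (𝒜 : Arrangement L) (i j : L) (θ : ℝ) : Prop :=
  i ≠ j ∧ suppFn (𝒜.body i) θ = suppFn (𝒜.body j) θ ∧
  ∃ ε > 0, (∀ s ∈ Set.Ioo (θ - ε) θ, suppFn (𝒜.body j) s < suppFn (𝒜.body i) s) ∧
    ∀ t ∈ Set.Ioo θ (θ + ε), suppFn (𝒜.body i) t < suppFn (𝒜.body j) t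

/-- Carrier for labeled vector configurations: to each ordered pair of indices,
a closed set of directions (a finite set of unit vectors, in practice). -/
abbrev ConfigCarrier (L : Type*) : Type _ :=
  L × L → TopologicalSpace.Closeds Real.Angle

/-- The support configuration of an arrangement: `(i,j)` is labeled with the set
of outward normal directions of common supporting tangents meeting `i` first. -/
def suppConfig {L : Type*} [Fintype L] (𝒜 : Arrangement L) : ConfigCarrier L :=
  fun ij =>
    ⟨closure {a : Real.Angle | ∃ x : ℝ, a = (x : Real.Angle) ∧ DownCrossAt 𝒜 ij.1 ij.2 x},
      isClosed_closure⟩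

/-- The support configuration space `𝒱(Ω)` of a combinatorial type: labeled
configurations of directions obtained from the incidence sequence of a swap pair
representing `Ω` together with weakly increasing angles in `(0, 2π]`, where
consecutive angles may coincide only if the corresponding heights differ by
more than one. -/
def VSpace {L : Type*} [Fintype L] (Ω : CombType L) : Set (ConfigCarrier L) :=
  {X | ∃ P : SwapPair L, P.cls = Ω ∧ ∃ θ : Fin P.heights.length → ℝ,
    (∀ t, θ t ∈ Set.Ioc 0 (2 * Real.pi)) ∧
    (∀ s t : Fin P.heights.length, s ≤ t → θ s ≤ θ t) ∧
    (∀ s t : Fin P.heights.length, s.1 + 1 = t.1 → θ s = θ t →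
      P.heights.get s + 1 < P.heights.get t ∨ P.heights.get t + 1 < P.heights.get s) ∧
    ∀ i j : L, X (i, j) =
      ⟨closure {a : Real.Angle |
          ∃ t : Fin P.heights.length, incFst P t = i ∧ incSnd P t = j ∧ a = (θ t : Real.Angle)},
        isClosed_closure⟩}

/-- Rotation of the plane by angle `α` (the `SO(2)` action on bodies). -/
def rotPt (α : ℝ) (p : ℝ × ℝ) : ℝ × ℝ :=
  (p.1 * Real.cos α - p.2 * Real.sin α, p.1 * Real.sin α + p.2 * Real.cos α)

/-- The `SO(2)` action on configurations of directions: rotate every label. -/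
def rotConfig {L : Type*} (α : ℝ) (X : ConfigCarrier L) : ConfigCarrier L :=
  fun ij =>
    ⟨closure ((fun a : Real.Angle => a + (α : Real.Angle)) '' (X ij : Set Real.Angle)),
      isClosed_closure⟩

end RealBody

namespace RealBody

open List

variable {L : Type*} [Fintype L]

/-! #### List lemmas on replicated flattenings -/

private lemma flatten_replicate_length {α : Type*} (p : ℕ) (a : List α) :
    ((List.replicate p a).flatten).length = p * a.length := by
  induction p with
  | zero => simp
  | succ q ih =>
    rw [List.replicate_succ, List.flatten_cons, List.length_append, ih]
    ring

private lemma replicate_flatten_inj {α : Type*} {p : ℕ} (hp : p ≠ 0) {a b : List α}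
    (h : (List.replicate p a).flatten = (List.replicate p b).flatten) : a = b := by
  have hlen : a.length = b.length := by
    have := congrArg List.length h
    rw [flatten_replicate_length, flatten_replicate_length] at this
    exact Nat.eq_of_mul_eq_mul_left (Nat.pos_of_ne_zero hp) this
  cases p with
  | zero => exact absurd rfl hp
  | succ q =>
    rw [List.replicate_succ, List.replicate_succ, List.flatten_cons, List.flatten_cons] at h
    exact (List.append_inj h hlen).1

private lemma replicate_flatten_rotate {α : Type*} (p : ℕ) (a : α) (s : List α) :
    (List.replicate p (a :: s)).flatten ++ [a]
      = a :: (List.replicate p (s ++ [a])).flatten := by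
  induction p with
  | zero => simp
  | succ q ih =>
    rw [List.replicate_succ, List.replicate_succ, List.flatten_cons, List.flatten_cons,
      List.cons_append, List.cons_append, List.append_assoc, ih]
    simp

private lemma rep_head {α : Type*} {p : ℕ} {r t : List α} {x : α}
    (h : (List.replicate p r).flatten = x :: t) :
    ∃ s, r = x :: s ∧ (List.replicate p (s ++ [x])).flatten = t ++ [x] := by
  cases p with
  | zero => simp at h
  | succ q =>
    cases r with
    | nil =>
      have : (List.replicate (q + 1) ([] : List α)).flatten = [] := by
        simp [List.flatten_eq_nil_iff]
      rw [this] at h; simp at h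
    | cons y s =>
      have h' := h
      rw [List.replicate_succ, List.flatten_cons, List.cons_append] at h'
      obtain ⟨rfl, -⟩ := List.cons_eq_cons.mp h'
      refine ⟨s, rfl, ?_⟩
      have hrot := replicate_flatten_rotate (q + 1) y s
      rw [h, List.cons_append] at hrot
      exact (List.cons_eq_cons.mp hrot).2.symm

private lemma rep_last {α : Type*} {p : ℕ} {r t : List α} {x : α} (hp : p ≠ 0)
    (h : (List.replicate p r).flatten = t ++ [x]) :
    ∃ s, r = s ++ [x] ∧ (List.replicate p (x :: s)).flatten = x :: t := by
  obtain rfl | ⟨s, y, rfl⟩ := r.eq_nil_or_concat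
  · exfalso
    have : (List.replicate p ([] : List α)).flatten = [] := by
      simp [List.flatten_eq_nil_iff]
    rw [this] at h
    exact absurd h.symm (by simp)
  · rw [List.concat_eq_append] at *
    obtain ⟨q, rfl⟩ := Nat.exists_eq_succ_of_ne_zero hp
    have hrot := replicate_flatten_rotate (q + 1) y s
    rw [h] at hrot
    have hF : (List.replicate (q + 1) (y :: s)).flatten
        = y :: (s ++ (List.replicate q (y :: s)).flatten) := by
      rw [List.replicate_succ, List.flatten_cons, List.cons_append]
    rw [hF, List.cons_append] at hrot
    have h2 := (List.cons_eq_cons.mp hrot).2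
    have h3 := List.append_inj' h2 (by simp)
    obtain ⟨h4, h5⟩ := h3
    have hyx : y = x := by simpa using h5
    subst hyx
    exact ⟨s, rfl, by rw [hF, h4]⟩

/-! #### Entries of a swap sequence, computed recursively -/

private def pick (i : L) (e : L × L) : Option L :=
  if e.1 = i then some e.2 else if e.2 = i then some e.1 else none

private def entHead (n : ℕ) (h : ℕ) (ρ : Fin n ≃ L) : List (L × L) :=
  if hh : h + 1 < n then [(ρ ⟨h + 1, hh⟩, ρ ⟨h, Nat.lt_of_succ_lt hh⟩)] else []

private def entList (n : ℕ) : List ℕ → (Fin n ≃ L) → List (L × L)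
  | [], _ => []
  | h :: hs, ρ => entHead n h ρ ++ entList n hs ((adjSwap n h).trans ρ)

private lemma mul_trans {n : ℕ} (σ π : Equiv.Perm (Fin n)) (ρ : Fin n ≃ L) :
    (σ * π).trans ρ = π.trans (σ.trans ρ) := Equiv.ext fun _ => rfl

private lemma one_trans {n : ℕ} (ρ : Fin n ≃ L) :
    ((1 : Equiv.Perm (Fin n))).trans ρ = ρ := Equiv.ext fun _ => rfl

private def entF (n : ℕ) (l : List ℕ) (ρ : Fin n ≃ L) (t : Fin l.length) : Option (L × L) :=
  if hh : l.get t + 1 < n then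
    some (((((l.take t).map (adjSwap n)).prod).trans ρ) ⟨l.get t + 1, hh⟩,
          ((((l.take t).map (adjSwap n)).prod).trans ρ) ⟨l.get t, Nat.lt_of_succ_lt hh⟩)
  else none

private lemma entF_succ {n : ℕ} (h : ℕ) (hs : List ℕ) (ρ : Fin n ≃ L) (t : Fin hs.length) :
    entF n (h :: hs) ρ t.succ = entF n hs ((adjSwap n h).trans ρ) t := rfl

private lemma filterMap_entF {n : ℕ} :
    ∀ (l : List ℕ) (ρ : Fin n ≃ L),
      (List.finRange l.length).filterMap (entF n l ρ) = entList n l ρ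
  | [], ρ => by simp [entList]
  | h :: hs, ρ => by
    show (List.finRange (hs.length + 1)).filterMap (entF n (h :: hs) ρ) = _
    have h0 : entF n (h :: hs) ρ (0 : Fin (hs.length + 1)) =
        (if hh : h + 1 < n then
          some ((ρ ⟨h + 1, hh⟩, ρ ⟨h, Nat.lt_of_succ_lt hh⟩) : L × L)
         else none) := rfl
    have htail : (entF n (h :: hs) ρ) ∘ Fin.succ = entF n hs ((adjSwap n h).trans ρ) :=
      funext fun t => entF_succ h hs ρ t
    rw [List.finRange_succ, List.filterMap_cons, List.filterMap_map, htail,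
      filterMap_entF hs ((adjSwap n h).trans ρ), h0]
    show _ = entHead n h ρ ++ _
    by_cases hh : h + 1 < n
    · rw [entHead, dif_pos hh, dif_pos hh]
      rfl
    · rw [entHead, dif_neg hh, dif_neg hh]
      rfl

private lemma localSeq_eq (P : SwapPair L) (i : L) :
    localSeq P i = (entList (Fintype.card L) P.heights P.ρ).filterMap (pick i) := by
  rw [← filterMap_entF, List.filterMap_filterMap]
  unfold localSeq
  congr 1
  funext t
  have hsome : entF (Fintype.card L) P.heights P.ρ t = some (incFst P t, incSnd P t) := by
    unfold entF
    rw [dif_pos (heights_get_lt P t)]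
    rfl
  rw [hsome]
  rfl

private lemma entList_append {n : ℕ} :
    ∀ (l₁ l₂ : List ℕ) (ρ : Fin n ≃ L),
      entList n (l₁ ++ l₂) ρ
        = entList n l₁ ρ ++ entList n l₂ (((l₁.map (adjSwap n)).prod).trans ρ)
  | [], l₂, ρ => by simp [entList, one_trans]
  | h :: hs, l₂, ρ => by
    show entList n (h :: (hs ++ l₂)) ρ = _
    rw [entList, entList_append hs l₂ ((adjSwap n h).trans ρ), entList,
      List.map_cons, List.prod_cons, mul_trans, List.append_assoc]

/-! #### adjSwap facts -/

private lemma adjSwap_fix {n h : ℕ} (p : Fin n) (h1 : (p : ℕ) ≠ h) (h2 : (p : ℕ) ≠ h + 1) :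
    adjSwap n h p = p := by
  unfold adjSwap
  split
  · exact Equiv.swap_apply_of_ne_of_ne (fun e => h1 (congrArg Fin.val e))
      (fun e => h2 (congrArg Fin.val e))
  · rfl

private lemma adjSwap_comm {n h₁ h₂ : ℕ} (hsep : h₁ + 1 < h₂ ∨ h₂ + 1 < h₁) :
    adjSwap n h₁ * adjSwap n h₂ = adjSwap n h₂ * adjSwap n h₁ := by
  have hd : (adjSwap n h₁).Disjoint (adjSwap n h₂) := by
    intro p
    by_cases hp : (p : ℕ) = h₁ ∨ (p : ℕ) = h₁ + 1
    · right; exact adjSwap_fix p (by omega) (by omega)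
    · left; exact adjSwap_fix p (by omega) (by omega)
  exact hd.commute

private lemma entHead_congr {n : ℕ} (h : ℕ) (ρ ρ' : Fin n ≃ L)
    (hagree : ∀ (p : Fin n), (p : ℕ) = h ∨ (p : ℕ) = h + 1 → ρ p = ρ' p) :
    entHead n h ρ = entHead n h ρ' := by
  unfold entHead
  split
  · next hh =>
    rw [hagree ⟨h + 1, hh⟩ (Or.inr rfl), hagree ⟨h, Nat.lt_of_succ_lt hh⟩ (Or.inl rfl)]
  · rfl

private lemma pick_entHead_comm {n : ℕ} (h₁ h₂ : ℕ) (ρ : Fin n ≃ L)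
    (hsep : h₁ + 1 < h₂ ∨ h₂ + 1 < h₁) (i : L) :
    (entHead n h₁ ρ).filterMap (pick i) ++ (entHead n h₂ ρ).filterMap (pick i)
      = (entHead n h₂ ρ).filterMap (pick i) ++ (entHead n h₁ ρ).filterMap (pick i) := by
  classical
  have hne : ∀ (u v : Fin n), (u : ℕ) ≠ (v : ℕ) → ρ u ≠ ρ v :=
    fun u v huv e => huv (congrArg Fin.val (ρ.injective e))
  unfold entHead
  by_cases hh₁ : h₁ + 1 < n
  · by_cases hh₂ : h₂ + 1 < n
    · rw [dif_pos hh₁, dif_pos hh₂]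
      have key : pick i (ρ ⟨h₁ + 1, hh₁⟩, ρ ⟨h₁, Nat.lt_of_succ_lt hh₁⟩) = none ∨
          pick i (ρ ⟨h₂ + 1, hh₂⟩, ρ ⟨h₂, Nat.lt_of_succ_lt hh₂⟩) = none := by
        by_cases hx1 : ρ ⟨h₁ + 1, hh₁⟩ = i
        · right
          unfold pick
          rw [if_neg, if_neg]
          · exact fun e => hne ⟨h₂, Nat.lt_of_succ_lt hh₂⟩ ⟨h₁ + 1, hh₁⟩ (by simp; omega)
              (e.trans hx1.symm)
          · exact fun e => hne ⟨h₂ + 1, hh₂⟩ ⟨h₁ + 1, hh₁⟩ (by simp; omega)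
              (e.trans hx1.symm)
        · by_cases hx2 : ρ ⟨h₁, Nat.lt_of_succ_lt hh₁⟩ = i
          · right
            unfold pick
            rw [if_neg, if_neg]
            · exact fun e => hne ⟨h₂, Nat.lt_of_succ_lt hh₂⟩ ⟨h₁, Nat.lt_of_succ_lt hh₁⟩
                (by simp; omega) (e.trans hx2.symm)
            · exact fun e => hne ⟨h₂ + 1, hh₂⟩ ⟨h₁, Nat.lt_of_succ_lt hh₁⟩
                (by simp; omega) (e.trans hx2.symm)
          · left
            unfold pick
            rw [if_neg hx1, if_neg hx2]
      rcases key with hk | hk <;>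
        simp [List.filterMap_cons, hk]
    · rw [dif_neg hh₂]; simp
  · rw [dif_neg hh₁]; simp

private lemma entList_swap_rows {n : ℕ} (h₁ h₂ : ℕ) (post : List ℕ) (ρ : Fin n ≃ L)
    (hsep : h₁ + 1 < h₂ ∨ h₂ + 1 < h₁) (i : L) :
    (entList n (h₁ :: h₂ :: post) ρ).filterMap (pick i)
      = (entList n (h₂ :: h₁ :: post) ρ).filterMap (pick i) := by
  rw [entList, entList, entList, entList]
  have hD2 : entHead n h₂ ((adjSwap n h₁).trans ρ) = entHead n h₂ ρ :=
    entHead_congr h₂ _ _ (fun p hp => by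
      rw [Equiv.trans_apply, adjSwap_fix p (by omega) (by omega)])
  have hD1 : entHead n h₁ ((adjSwap n h₂).trans ρ) = entHead n h₁ ρ :=
    entHead_congr h₁ _ _ (fun p hp => by
      rw [Equiv.trans_apply, adjSwap_fix p (by omega) (by omega)])
  have hT : (adjSwap n h₂).trans ((adjSwap n h₁).trans ρ)
      = (adjSwap n h₁).trans ((adjSwap n h₂).trans ρ) := by
    rw [← mul_trans, ← mul_trans, adjSwap_comm hsep]
  rw [hD2, hD1, hT]
  rw [List.filterMap_append, List.filterMap_append, List.filterMap_append,
    List.filterMap_append, ← List.append_assoc, ← List.append_assoc,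
    pick_entHead_comm h₁ h₂ ρ hsep i]

/-! #### Bumps preserve the set of periods -/

private lemma bump_period_mp {Λ Λ' : Tableau L} {j k : L} (hb : Bump Λ Λ' j k) (p : ℕ)
    (h : ∃ Λ₁, IsPeriodOf Λ₁ Λ p) : ∃ Λ₂, IsPeriodOf Λ₂ Λ' p := by
  classical
  obtain ⟨Λ₁, hρ, hrow⟩ := h
  obtain ⟨hjk, ⟨rj, hΛj, hΛ'j⟩, ⟨rk, hΛk, hΛ'k⟩, hoth, hρ'⟩ := hb
  obtain ⟨sj, hsj, hj2⟩ := rep_head ((hrow j).symm.trans hΛj)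
  obtain ⟨sk, hsk, hk2⟩ := rep_head ((hrow k).symm.trans hΛk)
  refine ⟨⟨Λ'.ρ, fun i => if i = j then sj ++ [k] else if i = k then sk ++ [j] else Λ₁.row i⟩,
    rfl, ?_⟩
  intro i
  dsimp only
  by_cases hij : i = j
  · subst hij
    rw [hΛ'j, if_pos rfl, hj2]
  · by_cases hik : i = k
    · subst hik
      rw [hΛ'k, if_neg hij, if_pos rfl, hk2]
    · rw [if_neg hij, if_neg hik, hoth i hij hik, hrow i]

private lemma bump_period_mpr {Λ Λ' : Tableau L} {j k : L} (hb : Bump Λ Λ' j k) (p : ℕ)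
    (h : ∃ Λ₂, IsPeriodOf Λ₂ Λ' p) : ∃ Λ₁, IsPeriodOf Λ₁ Λ p := by
  classical
  obtain ⟨Λ₂, hρ, hrow⟩ := h
  obtain ⟨hjk, ⟨rj, hΛj, hΛ'j⟩, ⟨rk, hΛk, hΛ'k⟩, hoth, hρ'⟩ := hb
  have hp : p ≠ 0 := by
    rintro rfl
    have := (hrow j).symm.trans hΛ'j
    simp at this
  obtain ⟨sj, hsj, hj2⟩ := rep_last hp ((hrow j).symm.trans hΛ'j)
  obtain ⟨sk, hsk, hk2⟩ := rep_last hp ((hrow k).symm.trans hΛ'k)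
  refine ⟨⟨Λ.ρ, fun i => if i = j then k :: sj else if i = k then j :: sk else Λ₂.row i⟩,
    rfl, ?_⟩
  intro i
  dsimp only
  by_cases hij : i = j
  · subst hij
    rw [hΛj, if_pos rfl, hj2]
  · by_cases hik : i = k
    · subst hik
      rw [hΛk, if_neg hij, if_pos rfl, hk2]
    · rw [if_neg hij, if_neg hik, ← hoth i hij hik, hrow i]

private lemma bump_periodicity {Λ Λ' : Tableau L} {j k : L} (hb : Bump Λ Λ' j k) :
    Periodicity Λ = Periodicity Λ' := by
  unfold Periodicity
  congr 1
  ext p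
  simp only [Set.mem_setOf_eq]
  exact ⟨bump_period_mp hb p, bump_period_mpr hb p⟩

/-! #### Elementary moves preserve periodicity -/

private lemma elemMove_periodicity (P Q : SwapPair L) (hm : ElemMove P Q) :
    Periodicity (assocTableau P) = Periodicity (assocTableau Q) := by
  classical
  rcases hm with ⟨h, rest, hP, hQ, hρ⟩ | ⟨pre, h₁, h₂, post, hsep, hP, hQ, hρ⟩
  · -- cyclic shift: a bump
    have hhn : h + 1 < Fintype.card L :=
      P.heights_lt h (by rw [hP]; exact List.mem_cons_self)
    set n := Fintype.card L with hn
    set b : L := P.ρ ⟨h + 1, hhn⟩ with hbdef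
    set a : L := P.ρ ⟨h, Nat.lt_of_succ_lt hhn⟩ with hadef
    set tl : List (L × L) := entList n rest Q.ρ with htl
    have hσ : adjSwap n h = Equiv.swap ⟨h, Nat.lt_of_succ_lt hhn⟩ ⟨h + 1, hhn⟩ := dif_pos hhn
    have hEP : entList n P.heights P.ρ = (b, a) :: tl := by
      rw [hP, entList, ← hρ, entHead, dif_pos hhn]
      rfl
    have hEQ : entList n Q.heights Q.ρ = tl ++ [(b, a)] := by
      rw [hQ, entList_append]
      congr 1
      have h1 : ((rest.map (adjSwap n)).prod) * adjSwap n h = 1 := by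
        have h0 := Q.prod_eq_one
        rw [hQ, List.map_append, List.prod_append] at h0
        simpa using h0
      have h2 : adjSwap n h * ((rest.map (adjSwap n)).prod) = 1 := by
        have h3 := eq_inv_of_mul_eq_one_left h1
        rw [h3]
        simp
      have hπ : (((rest.map (adjSwap n)).prod)).trans Q.ρ = P.ρ := by
        rw [hρ, ← mul_trans, h2, one_trans]
      rw [hπ, entList, entList, entHead, dif_pos hhn]
      rfl
    have hab : b ≠ a := by
      intro e
      have := congrArg Fin.val (P.ρ.injective e)
      simp at this
    have hbump : Bump (assocTableau P) (assocTableau Q) b a := by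
      have hrowP : ∀ i, (assocTableau P).row i = ((b, a) :: tl).filterMap (pick i) := by
        intro i
        show localSeq P i = _
        rw [localSeq_eq, hEP]
      have hrowQ : ∀ i, (assocTableau Q).row i = tl.filterMap (pick i) ++ [(b, a)].filterMap (pick i) := by
        intro i
        show localSeq Q i = _
        rw [localSeq_eq, hEQ, List.filterMap_append]
      refine ⟨hab, ⟨tl.filterMap (pick b), ?_, ?_⟩, ⟨tl.filterMap (pick a), ?_, ?_⟩, ?_, ?_⟩
      · rw [hrowP b]
        simp [List.filterMap_cons, pick]
      · rw [hrowQ b]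
        simp [List.filterMap_cons, pick]
      · rw [hrowP a]
        simp [List.filterMap_cons, pick, hab]
      · rw [hrowQ a]
        simp [List.filterMap_cons, pick, hab]
      · intro i hijb hika
        rw [hrowP i, hrowQ i]
        have : pick i (b, a) = none := by
          unfold pick
          rw [if_neg (fun e => hijb e.symm), if_neg (fun e => hika e.symm)]
        simp [List.filterMap_cons, this]
      · show Q.ρ = P.ρ.trans (Equiv.swap b a)
        rw [hρ]
        apply Equiv.ext
        intro x
        rw [Equiv.trans_apply, Equiv.trans_apply, hσ, hbdef, hadef,
          Equiv.swap_comm, ← P.ρ.injective.swap_apply]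
    exact bump_periodicity hbump
  · -- independent transposition: the tableau is unchanged
    have hrows : localSeq P = localSeq Q := by
      funext i
      rw [localSeq_eq P i, localSeq_eq Q i, hP, hQ, hρ, entList_append, entList_append,
        List.filterMap_append, List.filterMap_append]
      congr 1
      exact entList_swap_rows h₁ h₂ post _ hsep i
    have htab : assocTableau P = assocTableau Q := by
      unfold assocTableau
      rw [hρ, hrows]
    rw [htab]

private lemma Tableau.ext' {Λ₁ Λ₂ : Tableau L} (h1 : Λ₁.ρ = Λ₂.ρ)
    (h2 : ∀ i, Λ₁.row i = Λ₂.row i) : Λ₁ = Λ₂ := by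
  obtain ⟨ρ₁, r₁⟩ := Λ₁
  obtain ⟨ρ₂, r₂⟩ := Λ₂
  simp only at h1 h2
  subst h1
  rw [funext h2]

end RealBody

/-- Lemma 8 of the paper.  The period of a tableau (with
some nonempty row) is unique, and any two tableaux representing the same
combinatorial type have the same periodicity. -/
theorem statement14 {L : Type*} [Fintype L] :
    (∀ Λ Λ₁ Λ₂ : RealBody.Tableau L, (∃ i, Λ.row i ≠ []) →
      RealBody.IsPeriodOf Λ₁ Λ (RealBody.Periodicity Λ) →
      RealBody.IsPeriodOf Λ₂ Λ (RealBody.Periodicity Λ) → Λ₁ = Λ₂) ∧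
    (∀ P Q : RealBody.SwapPair L, RealBody.SwapEquiv P Q →
      RealBody.Periodicity (RealBody.assocTableau P) =
        RealBody.Periodicity (RealBody.assocTableau Q)) := by
  constructor
  · rintro Λ Λ₁ Λ₂ ⟨i, hi⟩ h₁ h₂
    have hp : RealBody.Periodicity Λ ≠ 0 := by
      intro h0
      apply hi
      have := h₁.2 i
      rw [h0] at this
      simpa using this
    refine RealBody.Tableau.ext' (h₁.1.trans h₂.1.symm) (fun i' => ?_)
    exact RealBody.replicate_flatten_inj hp ((h₁.2 i').symm.trans (h₂.2 i'))
  · intro P Q h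
    induction h with
    | rel x y hxy => exact RealBody.elemMove_periodicity x y hxy
    | refl x => rfl
    | symm x y _ ih => exact ih.symm
    | trans x y z _ _ ih₁ ih₂ => exact ih₁.trans ih₂
end
end

section
/- Two tableaux are tableau representations of the same combinatorial type if and only if one can be obtained from the other by a finite sequence of bumps. -/
/- Common framework: arrangements of convex bodies in the plane, dual support
systems on the cylinder, swap pairs and combinatorial types, following
Dobbins–Holmsen–Hubard, "Realization spaces of arrangements of convex bodies". -/

open scoped Classical

noncomputable section

namespace S15
open RealBody

variable {L : Type*} [Fintype L]

/-- A swap pair without the product-one condition. -/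
structure Pre (L : Type*) [Fintype L] where
  ρ : Fin (Fintype.card L) ≃ L
  hs : List ℕ
  lt : ∀ h ∈ hs, h + 1 < Fintype.card L

lemma Pre.ext' {S T : Pre L} (h1 : S.ρ = T.ρ) (h2 : S.hs = T.hs) : S = T := by
  cases S; cases T; cases h1; cases h2; rfl

def Pre.perm (S : Pre L) (t : ℕ) : Equiv.Perm (Fin (Fintype.card L)) :=
  ((S.hs.take t).map (adjSwap (Fintype.card L))).prod

lemma Pre.get_lt (S : Pre L) (t : Fin S.hs.length) : S.hs.get t + 1 < Fintype.card L :=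
  S.lt _ (S.hs.get_mem _)

def Pre.fst (S : Pre L) (t : Fin S.hs.length) : L :=
  S.ρ (S.perm t.1 ⟨S.hs.get t + 1, S.get_lt t⟩)

def Pre.snd (S : Pre L) (t : Fin S.hs.length) : L :=
  S.ρ (S.perm t.1 ⟨S.hs.get t, Nat.lt_of_succ_lt (S.get_lt t)⟩)

def Pre.inc (S : Pre L) : List (L × L) :=
  (List.finRange S.hs.length).map fun t => (S.fst t, S.snd t)

def rowOf (i : L) (p : L × L) : Option L :=
  if p.1 = i then some p.2 else if p.2 = i then some p.1 else none

def Pre.loc (S : Pre L) (i : L) : List L := S.inc.filterMap (rowOf i)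

def Pre.tab (S : Pre L) : Tableau L := ⟨S.ρ, S.loc⟩

def _root_.RealBody.SwapPair.toPre (P : SwapPair L) : Pre L := ⟨P.ρ, P.heights, P.heights_lt⟩

lemma localSeq_eq (P : SwapPair L) (i : L) : localSeq P i = P.toPre.loc i := by
  unfold localSeq Pre.loc Pre.inc
  rw [List.filterMap_map]
  rfl

lemma assoc_eq (P : SwapPair L) : assocTableau P = P.toPre.tab := by
  unfold assocTableau Pre.tab
  congr 1
  funext i
  exact localSeq_eq P i

/-! ### adjSwap lemmas -/

lemma adjSwap_eq {n : ℕ} (h : ℕ) (hb : h + 1 < n) :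
    adjSwap n h = Equiv.swap ⟨h, Nat.lt_of_succ_lt hb⟩ ⟨h + 1, hb⟩ := dif_pos hb

lemma adjSwap_of_ge {n : ℕ} (h : ℕ) (hb : ¬ h + 1 < n) : adjSwap n h = 1 := dif_neg hb

lemma adjSwap_apply_ne {n : ℕ} (h : ℕ) (x : Fin n) (h1 : x.1 ≠ h) (h2 : x.1 ≠ h + 1) :
    adjSwap n h x = x := by
  unfold adjSwap
  split
  · exact Equiv.swap_apply_of_ne_of_ne (fun hx => h1 (congrArg Fin.val hx))
      (fun hx => h2 (congrArg Fin.val hx))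
  · rfl

lemma adjSwap_fst {n : ℕ} (h : ℕ) (hb : h + 1 < n) :
    adjSwap n h ⟨h, Nat.lt_of_succ_lt hb⟩ = ⟨h + 1, hb⟩ := by
  rw [adjSwap_eq h hb, Equiv.swap_apply_left]

lemma adjSwap_snd {n : ℕ} (h : ℕ) (hb : h + 1 < n) :
    adjSwap n h ⟨h + 1, hb⟩ = ⟨h, Nat.lt_of_succ_lt hb⟩ := by
  rw [adjSwap_eq h hb, Equiv.swap_apply_right]

lemma adjSwap_invol {n : ℕ} (h : ℕ) (x : Fin n) :
    adjSwap n h (adjSwap n h x) = x := by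
  unfold adjSwap
  split
  · exact Equiv.swap_apply_self _ _ _
  · rfl

lemma adjSwap_comm_apply {n : ℕ} (h₁ h₂ : ℕ) (gap : h₁ + 1 < h₂ ∨ h₂ + 1 < h₁) (x : Fin n) :
    adjSwap n h₁ (adjSwap n h₂ x) = adjSwap n h₂ (adjSwap n h₁ x) := by
  by_cases hb₁ : h₁ + 1 < n
  · by_cases hb₂ : h₂ + 1 < n
    · by_cases e1 : x.1 = h₁
      · have hx : x = ⟨h₁, Nat.lt_of_succ_lt hb₁⟩ := Fin.ext e1
        subst hx
        rw [adjSwap_apply_ne h₂ _ (by simp; omega) (by simp; omega), adjSwap_fst h₁ hb₁,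
          adjSwap_apply_ne h₂ _ (by simp; omega) (by simp; omega)]
      · by_cases e2 : x.1 = h₁ + 1
        · have hx : x = ⟨h₁ + 1, hb₁⟩ := Fin.ext e2
          subst hx
          rw [adjSwap_apply_ne h₂ _ (by simp; omega) (by simp; omega), adjSwap_snd h₁ hb₁,
            adjSwap_apply_ne h₂ _ (by simp; omega) (by simp; omega)]
        · by_cases e3 : x.1 = h₂
          · have hx : x = ⟨h₂, Nat.lt_of_succ_lt hb₂⟩ := Fin.ext e3
            subst hx
            rw [adjSwap_fst h₂ hb₂, adjSwap_apply_ne h₁ _ (by simp; omega) (by simp; omega),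
              adjSwap_apply_ne h₁ _ (by simp; omega) (by simp; omega), adjSwap_fst h₂ hb₂]
          · by_cases e4 : x.1 = h₂ + 1
            · have hx : x = ⟨h₂ + 1, hb₂⟩ := Fin.ext e4
              subst hx
              rw [adjSwap_snd h₂ hb₂, adjSwap_apply_ne h₁ _ (by simp; omega) (by simp; omega),
                adjSwap_apply_ne h₁ _ (by simp; omega) (by simp; omega), adjSwap_snd h₂ hb₂]
            · rw [adjSwap_apply_ne h₂ x e3 e4, adjSwap_apply_ne h₁ x e1 e2,
                adjSwap_apply_ne h₂ x e3 e4]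
    · rw [adjSwap_of_ge h₂ hb₂]; rfl
  · rw [adjSwap_of_ge h₁ hb₁]; rfl

lemma adjSwap_mul_comm {n : ℕ} (h₁ h₂ : ℕ) (gap : h₁ + 1 < h₂ ∨ h₂ + 1 < h₁) :
    adjSwap n h₁ * adjSwap n h₂ = adjSwap n h₂ * adjSwap n h₁ :=
  Equiv.ext fun x => by
    simp only [Equiv.Perm.mul_apply]
    exact adjSwap_comm_apply h₁ h₂ gap x

end S15

namespace S15
open RealBody

variable {L : Type*} [Fintype L]

lemma Pre.inc_length (S : Pre L) : S.inc.length = S.hs.length := by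
  simp [Pre.inc]

lemma Pre.inc_nil (S : Pre L) (hS : S.hs = []) : S.inc = [] := by
  obtain ⟨ρ, hs, lt⟩ := S
  dsimp only at hS
  subst hS
  rfl

lemma Pre.hb_of (S : Pre L) {h : ℕ} {rest : List ℕ} (hS : S.hs = h :: rest) :
    h + 1 < Fintype.card L :=
  S.lt h (by rw [hS]; exact List.mem_cons_self)

def Pre.tailOf (S : Pre L) {h : ℕ} {rest : List ℕ} (hS : S.hs = h :: rest) : Pre L :=
  ⟨(adjSwap (Fintype.card L) h).trans S.ρ, rest,
    fun x hx => S.lt x (by rw [hS]; exact List.mem_cons_of_mem _ hx)⟩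

lemma Pre.inc_eq (S : Pre L) {h : ℕ} {rest : List ℕ} (hS : S.hs = h :: rest) :
    S.inc = (S.ρ ⟨h + 1, S.hb_of hS⟩, S.ρ ⟨h, Nat.lt_of_succ_lt (S.hb_of hS)⟩)
      :: (S.tailOf hS).inc := by
  obtain ⟨ρ, hs, lt⟩ := S
  dsimp only at hS
  subst hS
  show (List.finRange (rest.length + 1)).map _ = _
  rw [List.finRange_succ, List.map_cons, List.map_map]
  congr 1

end S15

namespace S15
open RealBody

variable {L : Type*} [Fintype L]

def Pre.cons (h : ℕ) (hb : h + 1 < Fintype.card L) (U : Pre L) : Pre L :=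
  ⟨(adjSwap (Fintype.card L) h).trans U.ρ, h :: U.hs, by
    intro x hx
    rcases List.mem_cons.1 hx with rfl | hx
    · exact hb
    · exact U.lt x hx⟩

lemma Pre.cons_hs (h : ℕ) (hb : h + 1 < Fintype.card L) (U : Pre L) :
    (Pre.cons h hb U).hs = h :: U.hs := rfl

lemma Pre.cons_tailOf (S : Pre L) {h : ℕ} {rest : List ℕ} (hS : S.hs = h :: rest) :
    Pre.cons h (S.hb_of hS) (S.tailOf hS) = S := by
  apply Pre.ext'
  · apply Equiv.ext
    intro x
    show S.ρ (adjSwap _ h (adjSwap _ h x)) = S.ρ x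
    rw [adjSwap_invol]
  · exact hS.symm

/-- elementary transposition move on pre-swap-pairs -/
def PreMove (S T : Pre L) : Prop :=
  ∃ pre h₁ h₂ post, (h₁ + 1 < h₂ ∨ h₂ + 1 < h₁) ∧
    S.hs = pre ++ h₁ :: h₂ :: post ∧ T.hs = pre ++ h₂ :: h₁ :: post ∧ T.ρ = S.ρ

def Inv (e : L × L) (i : L) : Prop := e.1 = i ∨ e.2 = i

lemma premove_inc : ∀ (pre : List ℕ) (S T : Pre L) (h₁ h₂ : ℕ) (post : List ℕ),
    (h₁ + 1 < h₂ ∨ h₂ + 1 < h₁) → S.hs = pre ++ h₁ :: h₂ :: post →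
    T.hs = pre ++ h₂ :: h₁ :: post → T.ρ = S.ρ →
    ∃ I₀ a b I₁, S.inc = I₀ ++ a :: b :: I₁ ∧ T.inc = I₀ ++ b :: a :: I₁ ∧
      (∀ i, ¬(Inv a i ∧ Inv b i)) ∧ I₀.length = pre.length := by
  intro pre
  induction pre with
  | nil =>
    intro S T h₁ h₂ post gap hS hT hρ
    have hS' : S.hs = h₁ :: (h₂ :: post) := hS
    have hT' : T.hs = h₂ :: (h₁ :: post) := hT
    have hS'' : (S.tailOf hS').hs = h₂ :: post := rfl
    have hT'' : (T.tailOf hT').hs = h₁ :: post := rfl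
    have hb₁ : h₁ + 1 < Fintype.card L := S.hb_of hS'
    have hb₂ : h₂ + 1 < Fintype.card L := (S.tailOf hS').hb_of hS''
    refine ⟨[], (S.ρ ⟨h₁ + 1, hb₁⟩, S.ρ ⟨h₁, Nat.lt_of_succ_lt hb₁⟩),
      (S.ρ ⟨h₂ + 1, hb₂⟩, S.ρ ⟨h₂, Nat.lt_of_succ_lt hb₂⟩),
      ((S.tailOf hS').tailOf hS'').inc, ?_, ?_, ?_, rfl⟩
    · rw [S.inc_eq hS', (S.tailOf hS').inc_eq hS'']
      simp only [List.nil_append]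
      congr 3
      · show S.ρ (adjSwap _ h₁ ⟨h₂ + 1, hb₂⟩) = _
        rw [adjSwap_apply_ne h₁ _ (by simp; omega) (by simp; omega)]
      · show S.ρ (adjSwap _ h₁ ⟨h₂, _⟩) = _
        rw [adjSwap_apply_ne h₁ _ (by simp; omega) (by simp; omega)]
    · rw [T.inc_eq hT', (T.tailOf hT').inc_eq hT'']
      simp only [List.nil_append]
      have e2 : ((T.tailOf hT').tailOf hT'') = ((S.tailOf hS').tailOf hS'') := by
        refine Pre.ext' ?_ rfl
        apply Equiv.ext
        intro x
        show T.ρ (adjSwap _ h₂ (adjSwap _ h₁ x)) = S.ρ (adjSwap _ h₁ (adjSwap _ h₂ x))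
        rw [hρ, adjSwap_comm_apply h₁ h₂ gap]
      rw [e2, hρ]
      congr 3
      · show T.ρ (adjSwap _ h₂ ⟨h₁ + 1, hb₁⟩) = _
        rw [adjSwap_apply_ne h₂ _ (by simp; omega) (by simp; omega), hρ]
      · show T.ρ (adjSwap _ h₂ ⟨h₁, _⟩) = _
        rw [adjSwap_apply_ne h₂ _ (by simp; omega) (by simp; omega), hρ]
    · intro i hi
      obtain ⟨ha, hb⟩ := hi
      have inj := S.ρ.injective
      rcases ha with ha | ha <;> rcases hb with hb | hb <;>
        · simp only at ha hb
          have := inj (ha.trans hb.symm)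
          simp only [Fin.mk.injEq] at this
          omega
  | cons p pre ih =>
    intro S T h₁ h₂ post gap hS hT hρ
    have hS' : S.hs = p :: (pre ++ h₁ :: h₂ :: post) := hS
    have hT' : T.hs = p :: (pre ++ h₂ :: h₁ :: post) := hT
    have hρ' : (T.tailOf hT').ρ = (S.tailOf hS').ρ := by
      show (adjSwap _ p).trans T.ρ = (adjSwap _ p).trans S.ρ
      rw [hρ]
    obtain ⟨I₀, a, b, I₁, e1, e2, hd, hl⟩ :=
      ih (S.tailOf hS') (T.tailOf hT') h₁ h₂ post gap rfl rfl hρ'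
    refine ⟨(S.ρ ⟨p + 1, S.hb_of hS'⟩, S.ρ ⟨p, Nat.lt_of_succ_lt (S.hb_of hS')⟩) :: I₀,
      a, b, I₁, ?_, ?_, hd, by simp [hl]⟩
    · rw [S.inc_eq hS', e1]; rfl
    · rw [T.inc_eq hT', e2, hρ]; rfl

lemma filterMap_swap (i : L) (I₀ I₁ : List (L × L)) (a b : L × L)
    (hd : ¬(Inv a i ∧ Inv b i)) :
    (I₀ ++ a :: b :: I₁).filterMap (rowOf i) = (I₀ ++ b :: a :: I₁).filterMap (rowOf i) := by
  have : rowOf i a = none ∨ rowOf i b = none := by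
    unfold Inv at hd
    unfold rowOf
    by_cases h1 : a.1 = i
    · right
      by_cases h3 : b.1 = i
      · exact absurd ⟨Or.inl h1, Or.inl h3⟩ hd
      · by_cases h4 : b.2 = i
        · exact absurd ⟨Or.inl h1, Or.inr h4⟩ hd
        · simp [h3, h4]
    · by_cases h2 : a.2 = i
      · right
        by_cases h3 : b.1 = i
        · exact absurd ⟨Or.inr h2, Or.inl h3⟩ hd
        · by_cases h4 : b.2 = i
          · exact absurd ⟨Or.inr h2, Or.inr h4⟩ hd
          · simp [h3, h4]
      · left; simp [h1, h2]
  rcases this with h | h <;>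
    cases hb : rowOf i b <;> cases ha : rowOf i a <;>
      simp_all [List.filterMap_append, List.filterMap_cons]

lemma premove_loc {S T : Pre L} (hm : PreMove S T) : ∀ i, S.loc i = T.loc i := by
  obtain ⟨pre, h₁, h₂, post, gap, hS, hT, hρ⟩ := hm
  obtain ⟨I₀, a, b, I₁, e1, e2, hd, _⟩ := premove_inc pre S T h₁ h₂ post gap hS hT hρ
  intro i
  unfold Pre.loc
  rw [e1, e2]
  exact filterMap_swap i I₀ I₁ a b (hd i)

def prodMap (S : Pre L) : Equiv.Perm (Fin (Fintype.card L)) :=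
  (S.hs.map (adjSwap (Fintype.card L))).prod

lemma premove_prod {S T : Pre L} (hm : PreMove S T) : prodMap S = prodMap T := by
  obtain ⟨pre, h₁, h₂, post, gap, hS, hT, hρ⟩ := hm
  unfold prodMap
  rw [hS, hT]
  simp only [List.map_append, List.prod_append, List.map_cons, List.prod_cons]
  congr 1
  rw [← mul_assoc, ← mul_assoc, adjSwap_mul_comm h₁ h₂ gap]

lemma eqv_ρ {S T : Pre L} (he : Relation.EqvGen PreMove S T) : S.ρ = T.ρ := by
  induction he with
  | rel _ _ hm =>
    obtain ⟨_, _, _, _, _, _, _, hρ⟩ := hm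
    exact hρ.symm
  | refl => rfl
  | symm _ _ _ ih => exact ih.symm
  | trans _ _ _ _ _ ih1 ih2 => exact ih1.trans ih2

lemma eqv_loc {S T : Pre L} (he : Relation.EqvGen PreMove S T) : ∀ i, S.loc i = T.loc i := by
  induction he with
  | rel _ _ hm => exact premove_loc hm
  | refl => exact fun _ => rfl
  | symm _ _ _ ih => exact fun i => (ih i).symm
  | trans _ _ _ _ _ ih1 ih2 => exact fun i => (ih1 i).trans (ih2 i)

lemma eqv_prod {S T : Pre L} (he : Relation.EqvGen PreMove S T) : prodMap S = prodMap T := by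
  induction he with
  | rel _ _ hm => exact premove_prod hm
  | refl => rfl
  | symm _ _ _ ih => exact ih.symm
  | trans _ _ _ _ _ ih1 ih2 => exact ih1.trans ih2

def Pre.toSwap (S : Pre L) (h1 : prodMap S = 1) : SwapPair L := ⟨S.ρ, S.hs, S.lt, h1⟩

lemma toSwap_toPre (P : SwapPair L) (h1 : prodMap P.toPre = 1) :
    P.toPre.toSwap h1 = P := rfl

lemma prodMap_toPre (P : SwapPair L) : prodMap P.toPre = 1 := P.prod_eq_one

lemma eqv_swapEquiv {S T : Pre L} (he : Relation.EqvGen PreMove S T) :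
    ∀ (h1 : prodMap S = 1) (h2 : prodMap T = 1),
      SwapEquiv (S.toSwap h1) (T.toSwap h2) := by
  induction he with
  | rel S T hm =>
    intro h1 h2
    obtain ⟨pre, h₁, h₂, post, gap, hS, hT, hρ⟩ := hm
    exact Relation.EqvGen.rel _ _ (Or.inr ⟨pre, h₁, h₂, post, gap, hS, hT, hρ⟩)
  | refl S => intro h1 h2; exact Relation.EqvGen.refl _
  | symm S T _ ih => intro h1 h2; exact Relation.EqvGen.symm _ _ (ih h2 h1)
  | trans S U T hSU _ ih1 ih2 =>
    intro h1 h2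
    have hU : prodMap U = 1 := by rw [← eqv_prod hSU]; exact h1
    exact Relation.EqvGen.trans _ _ _ (ih1 h1 hU) (ih2 hU h2)

lemma premove_cons {U V : Pre L} (h : ℕ) (hb : h + 1 < Fintype.card L)
    (hm : PreMove U V) : PreMove (Pre.cons h hb U) (Pre.cons h hb V) := by
  obtain ⟨pre, h₁, h₂, post, gap, hS, hT, hρ⟩ := hm
  exact ⟨h :: pre, h₁, h₂, post, gap, by simp [Pre.cons_hs, hS],
    by simp [Pre.cons_hs, hT], by show (adjSwap _ h).trans V.ρ = (adjSwap _ h).trans U.ρ; rw [hρ]⟩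

lemma eqv_cons {U V : Pre L} (h : ℕ) (hb : h + 1 < Fintype.card L)
    (he : Relation.EqvGen PreMove U V) :
    Relation.EqvGen PreMove (Pre.cons h hb U) (Pre.cons h hb V) := by
  induction he with
  | rel _ _ hm => exact Relation.EqvGen.rel _ _ (premove_cons h hb hm)
  | refl _ => exact Relation.EqvGen.refl _
  | symm _ _ _ ih => exact Relation.EqvGen.symm _ _ ih
  | trans _ _ _ _ _ ih1 ih2 => exact Relation.EqvGen.trans _ _ _ ih1 ih2

end S15

namespace S15
open RealBody

variable {L : Type*} [Fintype L]

lemma equiv_swap_apply {α β : Type*} [DecidableEq α] [DecidableEq β] (e : α ≃ β) (a b x : α) :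
    e (Equiv.swap a b x) = Equiv.swap (e a) (e b) (e x) := by
  rcases eq_or_ne x a with rfl | ha
  · rw [Equiv.swap_apply_left, Equiv.swap_apply_left]
  · rcases eq_or_ne x b with rfl | hb
    · rw [Equiv.swap_apply_right, Equiv.swap_apply_right]
    · rw [Equiv.swap_apply_of_ne_of_ne ha hb,
        Equiv.swap_apply_of_ne_of_ne (e.injective.ne ha) (e.injective.ne hb)]

lemma swapPair_ext {P Q : SwapPair L} (h1 : P.ρ = Q.ρ) (h2 : P.heights = Q.heights) :
    P = Q := by
  cases P; cases Q; cases h1; cases h2; rfl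

lemma inc_take : ∀ (u : List ℕ) (S T : Pre L) (v : List ℕ),
    T.ρ = S.ρ → T.hs = u → S.hs = u ++ v → S.inc.take u.length = T.inc := by
  intro u
  induction u with
  | nil =>
    intro S T v hρ hT hS
    rw [T.inc_nil hT]
    rfl
  | cons h u ih =>
    intro S T v hρ hT hS
    have hS' : S.hs = h :: (u ++ v) := hS
    have hT' : T.hs = h :: u := hT
    rw [S.inc_eq hS', T.inc_eq hT']
    show _ :: (S.tailOf hS').inc.take u.length = _
    have hρ' : (T.tailOf hT').ρ = (S.tailOf hS').ρ := by
      show (adjSwap _ h).trans T.ρ = (adjSwap _ h).trans S.ρ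
      rw [hρ]
    rw [ih (S.tailOf hS') (T.tailOf hT') v hρ' rfl rfl, hρ]

lemma inc_concat : ∀ (u : List ℕ) (S : Pre L) (h : ℕ) (hb : h + 1 < Fintype.card L),
    S.hs = u ++ [h] →
    S.inc = S.inc.take u.length ++
      [(S.ρ ((u.map (adjSwap (Fintype.card L))).prod ⟨h + 1, hb⟩),
        S.ρ ((u.map (adjSwap (Fintype.card L))).prod ⟨h, Nat.lt_of_succ_lt hb⟩))] := by
  intro u
  induction u with
  | nil =>
    intro S h hb hS
    have hS' : S.hs = h :: [] := hS
    rw [S.inc_eq hS', (S.tailOf hS').inc_nil rfl]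
    rfl
  | cons p u ih =>
    intro S h hb hS
    have hS' : S.hs = p :: (u ++ [h]) := hS
    have e := ih (S.tailOf hS') h hb rfl
    have ht : S.inc.take (u.length + 1) =
        (S.ρ ⟨p + 1, S.hb_of hS'⟩, S.ρ ⟨p, Nat.lt_of_succ_lt (S.hb_of hS')⟩)
          :: (S.tailOf hS').inc.take u.length := by
      rw [S.inc_eq hS', List.take_succ_cons]
    have hπ : ((p :: u).map (adjSwap (Fintype.card L))).prod
        = adjSwap (Fintype.card L) p * (u.map (adjSwap (Fintype.card L))).prod := by
      rw [List.map_cons, List.prod_cons]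
    show S.inc = S.inc.take (u.length + 1) ++ _
    rw [hπ, ht, S.inc_eq hS', List.cons_append]
    congr 1

/-! ### the cyclic shift -/

def shift (P : SwapPair L) : SwapPair L :=
  if hne : P.heights = [] then P else
    { ρ := (adjSwap (Fintype.card L) (P.heights.head hne)).trans P.ρ
      heights := P.heights.tail ++ [P.heights.head hne]
      heights_lt := by
        intro x hx
        apply P.heights_lt
        rcases List.mem_append.1 hx with hx | hx
        · exact List.mem_of_mem_tail hx
        · simp only [List.mem_singleton] at hx
          subst hx
          exact List.head_mem hne
      prod_eq_one := by
        have hc : P.heights = P.heights.head hne :: P.heights.tail :=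
          (List.cons_head_tail hne).symm
        have hp := P.prod_eq_one
        rw [hc, List.map_cons, List.prod_cons] at hp
        rw [List.map_append, List.prod_append, List.map_singleton, List.prod_singleton,
          eq_inv_of_mul_eq_one_right hp]
        exact inv_mul_cancel _ }

lemma shift_of (P : SwapPair L) {h : ℕ} {rest : List ℕ} (hP : P.heights = h :: rest) :
    (shift P).heights = rest ++ [h] ∧
      (shift P).ρ = (adjSwap (Fintype.card L) h).trans P.ρ := by
  have hne : P.heights ≠ [] := by rw [hP]; exact List.cons_ne_nil _ _
  have h1 : P.heights.head hne = h := by simp only [hP, List.head_cons]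
  have h2 : P.heights.tail = rest := by simp only [hP, List.tail_cons]
  constructor
  · show (if hne' : P.heights = [] then P else _).heights = _
    rw [dif_neg hne]
    simp only [h1, h2]
  · show (if hne' : P.heights = [] then P else _).ρ = _
    rw [dif_neg hne]
    simp only [h1]

lemma shift_eq (P Q : SwapPair L) {h : ℕ} {rest : List ℕ} (hP : P.heights = h :: rest)
    (hQh : Q.heights = rest ++ [h])
    (hQρ : Q.ρ = (adjSwap (Fintype.card L) h).trans P.ρ) : Q = shift P :=
  swapPair_ext (by rw [hQρ, (shift_of P hP).2]) (by rw [hQh, (shift_of P hP).1])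

/-! ### a cyclic shift induces a bump -/

lemma shift_bump (P Q : SwapPair L) (h : ℕ) (rest : List ℕ)
    (hP : P.heights = h :: rest) (hQh : Q.heights = rest ++ [h])
    (hQρ : Q.ρ = (adjSwap (Fintype.card L) h).trans P.ρ) :
    ∃ hb : h + 1 < Fintype.card L,
      Bump (assocTableau P) (assocTableau Q)
        (P.ρ ⟨h + 1, hb⟩) (P.ρ ⟨h, Nat.lt_of_succ_lt hb⟩) := by
  have hS : P.toPre.hs = h :: rest := hP
  have hb : h + 1 < Fintype.card L := P.toPre.hb_of hS
  refine ⟨hb, ?_⟩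
  set S := P.toPre with hSdef
  set S' := S.tailOf hS with hS'def
  set j := P.ρ ⟨h + 1, hb⟩ with hj
  set k := P.ρ ⟨h, Nat.lt_of_succ_lt hb⟩ with hk
  have jk_ne : j ≠ k := by
    intro e
    have := P.ρ.injective e
    simp only [Fin.mk.injEq] at this
    omega
  have incP : S.inc = (j, k) :: S'.inc := S.inc_eq hS
  have hQS : Q.toPre.hs = rest ++ [h] := hQh
  have incQ : Q.toPre.inc = S'.inc ++ [(j, k)] := by
    have e1 := inc_concat rest Q.toPre h hb hQS
    have e2 : Q.toPre.inc.take rest.length = S'.inc := by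
      apply inc_take rest Q.toPre S' [h] _ rfl hQS
      show S'.ρ = Q.ρ
      rw [hQρ]
      rfl
    have key : adjSwap (Fintype.card L) h * (rest.map (adjSwap (Fintype.card L))).prod = 1 := by
      have hp := P.prod_eq_one
      rw [hP, List.map_cons, List.prod_cons] at hp
      exact hp
    rw [e1, e2]
    congr 3 <;>
    · rw [show Q.toPre.ρ = (adjSwap (Fintype.card L) h).trans P.ρ from hQρ,
        Equiv.trans_apply]
      congr 1
      rw [← Equiv.Perm.mul_apply, key, Equiv.Perm.one_apply]
  have rowj : ∀ i : L, rowOf i (j, k) =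
      if i = j then some k else if i = k then some j else none := by
    intro i
    show (if j = i then some k else if k = i then some j else none) = _
    by_cases h1 : i = j
    · subst h1
      rw [if_pos rfl, if_pos rfl]
    · by_cases h2 : i = k
      · subst h2
        rw [if_neg (fun e => h1 e.symm), if_pos rfl, if_neg h1]
      · rw [if_neg (fun e => h1 e.symm), if_neg (fun e => h2 e.symm), if_neg h1, if_neg h2]
  rw [assoc_eq P, assoc_eq Q]
  refine ⟨jk_ne, ⟨S'.loc j, ?_, ?_⟩, ⟨S'.loc k, ?_, ?_⟩, ?_, ?_⟩
  · show S.loc j = k :: S'.loc j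
    unfold Pre.loc
    rw [incP, List.filterMap_cons, rowj j, if_pos rfl]
  · show Q.toPre.loc j = S'.loc j ++ [k]
    unfold Pre.loc
    rw [incQ, List.filterMap_append, List.filterMap_cons, rowj j, if_pos rfl]
    rfl
  · show S.loc k = j :: S'.loc k
    unfold Pre.loc
    rw [incP, List.filterMap_cons, rowj k, if_neg (Ne.symm jk_ne), if_pos rfl]
  · show Q.toPre.loc k = S'.loc k ++ [j]
    unfold Pre.loc
    rw [incQ, List.filterMap_append, List.filterMap_cons, rowj k,
      if_neg (Ne.symm jk_ne), if_pos rfl]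
    rfl
  · intro i hij hik
    show Q.toPre.loc i = S.loc i
    unfold Pre.loc
    rw [incQ, incP, List.filterMap_append, List.filterMap_cons, List.filterMap_cons,
      rowj i, if_neg hij, if_neg hik]
    simp
  · show Q.ρ = S.ρ.trans (Equiv.swap j k)
    apply Equiv.ext
    intro x
    rw [hQρ]
    show P.ρ (adjSwap _ h x) = Equiv.swap j k (P.ρ x)
    rw [adjSwap_eq h hb, equiv_swap_apply, ← hk, ← hj, Equiv.swap_comm]

lemma shift_bumpStep (P : SwapPair L) {h : ℕ} {rest : List ℕ}
    (hP : P.heights = h :: rest) :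
    BumpStep (assocTableau P) (assocTableau (shift P)) := by
  obtain ⟨hb, hbump⟩ := shift_bump P (shift P) h rest hP (shift_of P hP).1 (shift_of P hP).2
  exact ⟨_, _, hbump⟩

end S15

namespace S15
open RealBody

variable {L : Type*} [Fintype L]

lemma shift_iter (P : SwapPair L) : ∀ m, m ≤ P.heights.length →
    (shift^[m] P).heights = P.heights.drop m ++ P.heights.take m ∧
      (shift^[m] P).ρ = (P.toPre.perm m).trans P.ρ := by
  intro m
  induction m with
  | zero =>
    intro _
    refine ⟨by simp, ?_⟩
    apply Equiv.ext
    intro x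
    rfl
  | succ m ih =>
    intro hm
    have hmlt : m < P.heights.length := hm
    obtain ⟨ih1, ih2⟩ := ih (Nat.le_of_lt hmlt)
    have hd : P.heights.drop m = P.heights.get ⟨m, hmlt⟩ :: P.heights.drop (m + 1) := by
      rw [List.drop_eq_getElem_cons hmlt]; rfl
    have hR : (shift^[m] P).heights
        = P.heights.get ⟨m, hmlt⟩ :: (P.heights.drop (m + 1) ++ P.heights.take m) := by
      rw [ih1, hd]; rfl
    obtain ⟨e1, e2⟩ := shift_of (shift^[m] P) hR
    rw [Function.iterate_succ_apply']
    constructor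
    · rw [e1, List.append_assoc]
      congr 1
      rw [← List.take_concat_get' P.heights m hmlt]
      rfl
    · rw [e2, ih2]
      apply Equiv.ext
      intro x
      show P.ρ ((P.toPre.perm m) (adjSwap _ (P.heights.get ⟨m, hmlt⟩) x))
          = P.ρ ((P.toPre.perm (m + 1)) x)
      congr 1
      have : P.toPre.perm (m + 1)
          = P.toPre.perm m * adjSwap (Fintype.card L) (P.heights.get ⟨m, hmlt⟩) := by
        unfold Pre.perm
        have ht : P.toPre.hs.take (m + 1)
            = P.toPre.hs.take m ++ [P.heights.get ⟨m, hmlt⟩] := by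
          show P.heights.take (m + 1) = P.heights.take m ++ [P.heights.get ⟨m, hmlt⟩]
          rw [← List.take_concat_get' P.heights m hmlt]
          rfl
        rw [ht, List.map_append, List.prod_append, List.map_singleton, List.prod_singleton]
      rw [this]
      rfl

lemma shift_iter_len (P : SwapPair L) : shift^[P.heights.length] P = P := by
  obtain ⟨h1, h2⟩ := shift_iter P P.heights.length le_rfl
  apply swapPair_ext _ (by rw [h1]; simp)
  rw [h2]
  have : P.toPre.perm P.heights.length = 1 := by
    unfold Pre.perm
    rw [show P.toPre.hs.take P.heights.length = P.toPre.hs from P.toPre.hs.take_length]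
    exact P.prod_eq_one
  rw [this]
  apply Equiv.ext
  intro x
  rfl

lemma shift_cycle (P : SwapPair L) (hne : P.heights ≠ []) :
    Relation.ReflTransGen BumpStep (assocTableau (shift P)) (assocTableau P) := by
  have hlen : 0 < P.heights.length := List.length_pos_iff.2 hne
  have key : ∀ m, 0 < m → m ≤ P.heights.length →
      Relation.ReflTransGen BumpStep (assocTableau (shift P)) (assocTableau (shift^[m] P)) := by
    intro m
    induction m with
    | zero => intro h _; exact absurd h (by omega)
    | succ m ih =>
      intro _ hm
      rcases Nat.eq_zero_or_pos m with rfl | hm0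
      · simp only [zero_add, Function.iterate_one]
        exact Relation.ReflTransGen.refl
      · have hmlt : m < P.heights.length := hm
        have step : BumpStep (assocTableau (shift^[m] P)) (assocTableau (shift^[m + 1] P)) := by
          have hd : (shift^[m] P).heights
              = P.heights.get ⟨m, hmlt⟩ :: (P.heights.drop (m + 1) ++ P.heights.take m) := by
            rw [(shift_iter P m (Nat.le_of_lt hmlt)).1, List.drop_eq_getElem_cons hmlt]
            rfl
          rw [Function.iterate_succ_apply']
          exact shift_bumpStep (shift^[m] P) hd
        exact (ih hm0 (Nat.le_of_lt hmlt)).tail step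
  have := key P.heights.length hlen le_rfl
  rwa [shift_iter_len P] at this

lemma premove_assoc {P Q : SwapPair L} (hm : PreMove P.toPre Q.toPre) :
    assocTableau P = assocTableau Q := by
  rw [assoc_eq P, assoc_eq Q]
  unfold Pre.tab
  have h1 : P.toPre.ρ = Q.toPre.ρ := by
    obtain ⟨_, _, _, _, _, _, _, hρ⟩ := hm
    exact hρ.symm
  have h2 : P.toPre.loc = Q.toPre.loc := funext (premove_loc hm)
  rw [h1, h2]

lemma elem_forward {P Q : SwapPair L} (hm : ElemMove P Q) :
    Relation.ReflTransGen BumpStep (assocTableau P) (assocTableau Q) ∧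
      Relation.ReflTransGen BumpStep (assocTableau Q) (assocTableau P) := by
  rcases hm with ⟨h, rest, hP, hQh, hQρ⟩ | ⟨pre, h₁, h₂, post, gap, hP, hQ, hρ⟩
  · have hQ : Q = shift P := shift_eq P Q hP hQh hQρ
    constructor
    · obtain ⟨hb, hbump⟩ := shift_bump P Q h rest hP hQh hQρ
      exact Relation.ReflTransGen.single ⟨_, _, hbump⟩
    · rw [hQ]
      exact shift_cycle P (by rw [hP]; exact List.cons_ne_nil _ _)
  · have : assocTableau P = assocTableau Q :=
      premove_assoc ⟨pre, h₁, h₂, post, gap, hP, hQ, hρ⟩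
    rw [this]
    exact ⟨Relation.ReflTransGen.refl, Relation.ReflTransGen.refl⟩

lemma forward {P Q : SwapPair L} (h : SwapEquiv P Q) :
    Relation.ReflTransGen BumpStep (assocTableau P) (assocTableau Q) := by
  have : Relation.ReflTransGen BumpStep (assocTableau P) (assocTableau Q) ∧
      Relation.ReflTransGen BumpStep (assocTableau Q) (assocTableau P) := by
    induction h with
    | rel _ _ hm => exact elem_forward hm
    | refl _ => exact ⟨Relation.ReflTransGen.refl, Relation.ReflTransGen.refl⟩
    | symm _ _ _ ih => exact ⟨ih.2, ih.1⟩
    | trans _ _ _ _ _ ih1 ih2 => exact ⟨ih1.1.trans ih2.1, ih2.2.trans ih1.2⟩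
  exact this.1

end S15

namespace S15
open RealBody

variable {L : Type*} [Fintype L]

lemma rowOf_pair (j k i : L) (hne : j ≠ k) :
    rowOf i (j, k) = if i = j then some k else if i = k then some j else none := by
  show (if j = i then some k else if k = i then some j else none) = _
  by_cases h1 : i = j
  · subst h1
    rw [if_pos rfl, if_pos rfl]
  · by_cases h2 : i = k
    · subst h2
      rw [if_neg (fun e => h1 e.symm), if_pos rfl, if_neg h1]
    · rw [if_neg (fun e => h1 e.symm), if_neg (fun e => h2 e.symm), if_neg h1, if_neg h2]

lemma toFront : ∀ (u : List ℕ) (S : Pre L) (h : ℕ) (hb : h + 1 < Fintype.card L)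
    (v : List ℕ) (j k : L),
    S.hs = u ++ h :: v →
    (∀ e ∈ S.inc.take u.length, ¬ Inv e j ∧ ¬ Inv e k) →
    S.ρ ((u.map (adjSwap (Fintype.card L))).prod ⟨h + 1, hb⟩) = j →
    S.ρ ((u.map (adjSwap (Fintype.card L))).prod ⟨h, Nat.lt_of_succ_lt hb⟩) = k →
    ∃ T : Pre L, Relation.EqvGen PreMove S T ∧ T.ρ = S.ρ ∧ T.hs = h :: (u ++ v) ∧
      S.ρ ⟨h + 1, hb⟩ = j ∧ S.ρ ⟨h, Nat.lt_of_succ_lt hb⟩ = k := by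
  intro u
  induction u with
  | nil =>
    intro S h hb v j k hS hpre hj hk
    exact ⟨S, Relation.EqvGen.refl S, rfl, hS, hj, hk⟩
  | cons p u ih =>
    intro S h hb v j k hS hpre hj hk
    have hS' : S.hs = p :: (u ++ h :: v) := hS
    set S' := S.tailOf hS' with hS'def
    have hbp : p + 1 < Fintype.card L := S.hb_of hS'
    have htake : S.inc.take (u.length + 1)
        = (S.ρ ⟨p + 1, hbp⟩, S.ρ ⟨p, Nat.lt_of_succ_lt hbp⟩) :: S'.inc.take u.length := by
      rw [S.inc_eq hS', List.take_succ_cons]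
    have hpre' : ∀ e ∈ S'.inc.take u.length, ¬ Inv e j ∧ ¬ Inv e k := by
      intro e he
      apply hpre e
      show e ∈ S.inc.take (u.length + 1)
      rw [htake]
      exact List.mem_cons_of_mem _ he
    have he0 : ¬ Inv (S.ρ ⟨p + 1, hbp⟩, S.ρ ⟨p, Nat.lt_of_succ_lt hbp⟩) j ∧
        ¬ Inv (S.ρ ⟨p + 1, hbp⟩, S.ρ ⟨p, Nat.lt_of_succ_lt hbp⟩) k := by
      apply hpre
      show _ ∈ S.inc.take (u.length + 1)
      rw [htake]
      exact List.mem_cons_self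
    have hπ : (((p :: u) : List ℕ).map (adjSwap (Fintype.card L))).prod
        = adjSwap (Fintype.card L) p * (u.map (adjSwap (Fintype.card L))).prod := by
      rw [List.map_cons, List.prod_cons]
    rw [hπ] at hj hk
    have hj' : S'.ρ ((u.map (adjSwap (Fintype.card L))).prod ⟨h + 1, hb⟩) = j := hj
    have hk' : S'.ρ ((u.map (adjSwap (Fintype.card L))).prod
        ⟨h, Nat.lt_of_succ_lt hb⟩) = k := hk
    obtain ⟨T', eqvT', hρT', hhsT', hjf, hkf⟩ := ih S' h hb v j k rfl hpre' hj' hk'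
    -- hjf : S'.ρ ⟨h + 1, hb⟩ = j, i.e. S.ρ (adjSwap p ⟨h + 1⟩) = j
    have gap : h + 1 < p ∨ p + 1 < h := by
      by_contra hgap
      push_neg at hgap
      obtain ⟨g1, g2⟩ := hgap
      have hcase : h = p ∨ h = p + 1 ∨ p = h + 1 := by omega
      have hjf2 : S.ρ (adjSwap (Fintype.card L) p ⟨h + 1, hb⟩) = j := hjf
      have hkf2 : S.ρ (adjSwap (Fintype.card L) p ⟨h, Nat.lt_of_succ_lt hb⟩) = k := hkf
      rcases hcase with hc | hc | hc
      · have hfin : (⟨h, Nat.lt_of_succ_lt hb⟩ : Fin (Fintype.card L))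
            = ⟨p, Nat.lt_of_succ_lt hbp⟩ := Fin.ext hc
        rw [hfin, adjSwap_fst p hbp] at hkf2
        exact he0.2 (Or.inl hkf2)
      · have hfin : (⟨h, Nat.lt_of_succ_lt hb⟩ : Fin (Fintype.card L))
            = ⟨p + 1, hbp⟩ := Fin.ext hc
        rw [hfin, adjSwap_snd p hbp] at hkf2
        exact he0.2 (Or.inr hkf2)
      · have hfin : (⟨h + 1, hb⟩ : Fin (Fintype.card L))
            = ⟨p, Nat.lt_of_succ_lt hbp⟩ := Fin.ext hc.symm
        rw [hfin, adjSwap_fst p hbp] at hjf2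
        exact he0.1 (Or.inl hjf2)
    have hjS : S.ρ ⟨h + 1, hb⟩ = j := by
      have hjf2 : S.ρ (adjSwap (Fintype.card L) p ⟨h + 1, hb⟩) = j := hjf
      rwa [adjSwap_apply_ne p _ (by simp; omega) (by simp; omega)] at hjf2
    have hkS : S.ρ ⟨h, Nat.lt_of_succ_lt hb⟩ = k := by
      have hkf2 : S.ρ (adjSwap (Fintype.card L) p ⟨h, Nat.lt_of_succ_lt hb⟩) = k := hkf
      rwa [adjSwap_apply_ne p _ (by simp; omega) (by simp; omega)] at hkf2
    have hcρ : (Pre.cons p hbp T').ρ = S.ρ := by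
      show (adjSwap _ p).trans T'.ρ = S.ρ
      rw [hρT']
      apply Equiv.ext
      intro x
      show S.ρ (adjSwap _ p (adjSwap _ p x)) = S.ρ x
      rw [adjSwap_invol]
    refine ⟨⟨S.ρ, h :: p :: (u ++ v), ?_⟩, ?_, rfl, rfl, hjS, hkS⟩
    · intro x hx
      rcases List.mem_cons.1 hx with rfl | hx
      · exact hb
      rcases List.mem_cons.1 hx with rfl | hx
      · exact hbp
      apply S.lt
      rw [hS']
      rcases List.mem_append.1 hx with hx | hx
      · exact List.mem_cons_of_mem _ (List.mem_append.2 (Or.inl hx))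
      · exact List.mem_cons_of_mem _ (List.mem_append.2 (Or.inr (List.mem_cons_of_mem _ hx)))
    · have eqv1 : Relation.EqvGen PreMove S (Pre.cons p hbp T') := by
        rw [← S.cons_tailOf hS']
        exact eqv_cons p hbp eqvT'
      refine Relation.EqvGen.trans _ _ _ eqv1 (Relation.EqvGen.rel _ _ ?_)
      refine ⟨[], p, h, u ++ v, Or.symm gap, ?_, rfl, hcρ.symm⟩
      show (Pre.cons p hbp T').hs = p :: h :: (u ++ v)
      rw [Pre.cons_hs, hhsT']

lemma loc_first : ∀ (l : List ℕ) (T : Pre L) (j k : L), T.hs = l →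
    (∃ r, T.loc j = k :: r) → (∃ r, T.loc k = j :: r) →
    ∃ u h v, ∃ hb : h + 1 < Fintype.card L,
      T.hs = u ++ h :: v ∧
      (∀ e ∈ T.inc.take u.length, ¬ Inv e j ∧ ¬ Inv e k) ∧
      ((T.ρ ((u.map (adjSwap (Fintype.card L))).prod ⟨h + 1, hb⟩) = j ∧
        T.ρ ((u.map (adjSwap (Fintype.card L))).prod ⟨h, Nat.lt_of_succ_lt hb⟩) = k) ∨
       (T.ρ ((u.map (adjSwap (Fintype.card L))).prod ⟨h + 1, hb⟩) = k ∧
        T.ρ ((u.map (adjSwap (Fintype.card L))).prod ⟨h, Nat.lt_of_succ_lt hb⟩) = j)) := by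
  intro l
  induction l with
  | nil =>
    intro T j k hT hj hk
    obtain ⟨r, hr⟩ := hj
    have : T.loc j = [] := by
      unfold Pre.loc
      rw [T.inc_nil hT]
      rfl
    rw [this] at hr
    exact absurd hr (by simp)
  | cons p l ih =>
    intro T j k hT hj hk
    have hT' : T.hs = p :: l := hT
    set T' := T.tailOf hT' with hT'def
    have hbp : p + 1 < Fintype.card L := T.hb_of hT'
    set a := T.ρ ⟨p + 1, hbp⟩ with ha
    set b := T.ρ ⟨p, Nat.lt_of_succ_lt hbp⟩ with hbdef
    have ab_ne : a ≠ b := by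
      intro e
      have := T.ρ.injective e
      simp only [Fin.mk.injEq] at this
      omega
    have hinc := T.inc_eq hT'
    have hlocT : ∀ i, T.loc i = ((a, b) :: T'.inc).filterMap (rowOf i) := by
      intro i
      unfold Pre.loc
      rw [hinc]
    by_cases haj : a = j
    · -- first event involves j; partner b must be k
      have hlj : T.loc j = b :: T'.loc j := by
        rw [hlocT j, List.filterMap_cons, show rowOf j (a, b) = some b from by
          unfold rowOf; rw [if_pos haj]]
        rfl
      obtain ⟨r, hr⟩ := hj
      rw [hlj] at hr
      injection hr with h1 _
      refine ⟨[], p, l, hbp, hT, by intro e he; exact absurd he (by simp), Or.inl ⟨?_, ?_⟩⟩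
      · exact haj
      · exact h1
    · by_cases hak : a = k
      · have hlk : T.loc k = b :: T'.loc k := by
          rw [hlocT k, List.filterMap_cons, show rowOf k (a, b) = some b from by
            unfold rowOf; rw [if_pos hak]]
          rfl
        obtain ⟨r, hr⟩ := hk
        rw [hlk] at hr
        injection hr with h1 _
        refine ⟨[], p, l, hbp, hT, by intro e he; exact absurd he (by simp), Or.inr ⟨?_, ?_⟩⟩
        · exact hak
        · exact h1
      · by_cases hbj : b = j
        · -- row j starts with a, so a = k: contradiction with hak
          have hlj : T.loc j = a :: T'.loc j := by
            rw [hlocT j, List.filterMap_cons, show rowOf j (a, b) = some a from by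
              unfold rowOf; rw [if_neg haj, if_pos hbj]]
            rfl
          obtain ⟨r, hr⟩ := hj
          rw [hlj] at hr
          injection hr with h1 _
          exact absurd h1 hak
        · by_cases hbk : b = k
          · have hlk : T.loc k = a :: T'.loc k := by
              rw [hlocT k, List.filterMap_cons, show rowOf k (a, b) = some a from by
                unfold rowOf; rw [if_neg hak, if_pos hbk]]
              rfl
            obtain ⟨r, hr⟩ := hk
            rw [hlk] at hr
            injection hr with h1 _
            exact absurd h1 haj
          · -- first event avoids j and k
            have hrnj : rowOf j (a, b) = none := by
              unfold rowOf; rw [if_neg haj, if_neg hbj]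
            have hrnk : rowOf k (a, b) = none := by
              unfold rowOf; rw [if_neg hak, if_neg hbk]
            have hlj : T.loc j = T'.loc j := by
              rw [hlocT j, List.filterMap_cons, hrnj]
              rfl
            have hlk : T.loc k = T'.loc k := by
              rw [hlocT k, List.filterMap_cons, hrnk]
              rfl
            obtain ⟨u', h, v, hb, hdec, hpre, horient⟩ :=
              ih T' j k rfl (hlj ▸ hj) (hlk ▸ hk)
            have hπ : (((p :: u') : List ℕ).map (adjSwap (Fintype.card L))).prod
                = adjSwap (Fintype.card L) p * (u'.map (adjSwap (Fintype.card L))).prod := by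
              rw [List.map_cons, List.prod_cons]
            refine ⟨p :: u', h, v, hb, ?_, ?_, ?_⟩
            · have hdec' : l = u' ++ h :: v := hdec
              rw [hT', hdec']
              rfl
            · intro e he
              have he' : e ∈ (a, b) :: T'.inc.take u'.length := by
                have : T.inc.take (u'.length + 1)
                    = (a, b) :: T'.inc.take u'.length := by
                  rw [hinc, List.take_succ_cons]
                rw [show ((p :: u' : List ℕ)).length = u'.length + 1 from rfl, this] at he
                exact he
              rcases List.mem_cons.1 he' with rfl | he'
              · constructor
                · intro hInv
                  rcases hInv with h1 | h1
                  · exact haj h1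
                  · exact hbj h1
                · intro hInv
                  rcases hInv with h1 | h1
                  · exact hak h1
                  · exact hbk h1
              · exact hpre e he'
            · rcases horient with ⟨o1, o2⟩ | ⟨o1, o2⟩
              · exact Or.inl ⟨by rw [hπ]; exact o1, by rw [hπ]; exact o2⟩
              · exact Or.inr ⟨by rw [hπ]; exact o1, by rw [hπ]; exact o2⟩

end S15

namespace S15
open RealBody

variable {L : Type*} [Fintype L]

lemma tab_eq : ∀ (l : List ℕ) (S T : Pre L), S.hs = l → S.ρ = T.ρ →
    (∀ i, S.loc i = T.loc i) → Relation.EqvGen PreMove S T := by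
  intro l
  induction l with
  | nil =>
    intro S T hS hρ hloc
    have hT : T.hs = [] := by
      by_contra hne
      obtain ⟨p, rest, hTc⟩ := List.exists_cons_of_ne_nil hne
      have hbp := T.hb_of hTc
      set a := T.ρ ⟨p + 1, hbp⟩ with hadef
      set b := T.ρ ⟨p, Nat.lt_of_succ_lt hbp⟩ with hbdef
      have hTa : T.loc a = b :: (T.tailOf hTc).loc a := by
        unfold Pre.loc
        rw [T.inc_eq hTc, List.filterMap_cons, show rowOf a (a, b) = some b from by
          unfold rowOf; rw [if_pos rfl]]
      have hSa : S.loc a = [] := by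
        unfold Pre.loc
        rw [S.inc_nil hS]
        rfl
      rw [hloc a, hTa] at hSa
      exact absurd hSa (by simp)
    rw [Pre.ext' hρ (hS.trans hT.symm)]
    exact Relation.EqvGen.refl T
  | cons h rest ih =>
    intro S T hS hρ hloc
    have hS' : S.hs = h :: rest := hS
    have hb := S.hb_of hS'
    set S' := S.tailOf hS' with hS'def
    set j := S.ρ ⟨h + 1, hb⟩ with hjd
    set k := S.ρ ⟨h, Nat.lt_of_succ_lt hb⟩ with hkd
    have jk_ne : j ≠ k := by
      intro e
      have := S.ρ.injective e
      simp only [Fin.mk.injEq] at this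
      omega
    have hlocSj : S.loc j = k :: S'.loc j := by
      unfold Pre.loc
      rw [S.inc_eq hS', List.filterMap_cons, rowOf_pair j k j jk_ne, if_pos rfl]
    have hlocSk : S.loc k = j :: S'.loc k := by
      unfold Pre.loc
      rw [S.inc_eq hS', List.filterMap_cons, rowOf_pair j k k jk_ne,
        if_neg (Ne.symm jk_ne), if_pos rfl]
    have hTj : ∃ r, T.loc j = k :: r := ⟨S'.loc j, by rw [← hloc j, hlocSj]⟩
    have hTk : ∃ r, T.loc k = j :: r := ⟨S'.loc k, by rw [← hloc k, hlocSk]⟩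
    obtain ⟨u, h', v, hb', hdec, hpre, horient⟩ := loc_first T.hs T j k rfl hTj hTk
    rcases horient with ⟨o1, o2⟩ | ⟨o1, o2⟩
    · obtain ⟨T₁, eqvT₁, hρT₁, hhsT₁, hjT, hkT⟩ := toFront u T h' hb' v j k hdec hpre o1 o2
      -- h' = h
      have hh : h' = h := by
        have e1 : S.ρ ⟨h' + 1, hb'⟩ = j := by rw [hρ]; exact hjT
        have := S.ρ.injective (e1.trans hjd)
        simp only [Fin.mk.injEq] at this
        omega
      subst hh
      have hρT₁S : T₁.ρ = S.ρ := hρT₁.trans hρ.symm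
      have hhsT₁' : T₁.hs = h' :: (u ++ v) := hhsT₁
      set T₁' := T₁.tailOf hhsT₁' with hT₁'def
      have hincT₁ : T₁.inc = (j, k) :: T₁'.inc := by
        rw [T₁.inc_eq hhsT₁']
        congr 2 <;> rw [hρT₁S]
      have hlocT₁ : ∀ i, T₁.loc i = T.loc i := fun i => (eqv_loc eqvT₁ i).symm
      have hlocT₁j : T₁.loc j = k :: T₁'.loc j := by
        unfold Pre.loc
        rw [hincT₁, List.filterMap_cons, rowOf_pair j k j jk_ne, if_pos rfl]
      have hlocT₁k : T₁.loc k = j :: T₁'.loc k := by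
        unfold Pre.loc
        rw [hincT₁, List.filterMap_cons, rowOf_pair j k k jk_ne,
          if_neg (Ne.symm jk_ne), if_pos rfl]
      have hloc' : ∀ i, S'.loc i = T₁'.loc i := by
        intro i
        by_cases hij : i = j
        · rw [hij]
          have e1 : k :: S'.loc j = k :: T₁'.loc j := by
            rw [← hlocSj, ← hlocT₁j, hloc j, hlocT₁ j]
          injection e1
        · by_cases hik : i = k
          · rw [hik]
            have e1 : j :: S'.loc k = j :: T₁'.loc k := by
              rw [← hlocSk, ← hlocT₁k, hloc k, hlocT₁ k]
            injection e1
          · have e1 : S.loc i = S'.loc i := by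
              unfold Pre.loc
              rw [S.inc_eq hS', List.filterMap_cons, rowOf_pair j k i jk_ne,
                if_neg hij, if_neg hik]
            have e2 : T₁.loc i = T₁'.loc i := by
              unfold Pre.loc
              rw [hincT₁, List.filterMap_cons, rowOf_pair j k i jk_ne,
                if_neg hij, if_neg hik]
            rw [← e1, ← e2, hloc i, hlocT₁ i]
      have hρ' : S'.ρ = T₁'.ρ := by
        show (adjSwap _ h').trans S.ρ = (adjSwap _ h').trans T₁.ρ
        rw [hρT₁S]
      have eqvtails := ih S' T₁' rfl hρ' hloc'
      have eqvcons := eqv_cons h' hb eqvtails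
      have e3 : Pre.cons h' hb S' = S := S.cons_tailOf hS'
      have e4 : Pre.cons h' hb T₁' = T₁ := T₁.cons_tailOf hhsT₁'
      rw [e3, e4] at eqvcons
      exact Relation.EqvGen.trans _ _ _ eqvcons (Relation.EqvGen.symm _ _ eqvT₁)
    · -- impossible orientation
      exfalso
      obtain ⟨T₁, eqvT₁, hρT₁, hhsT₁, hjT, hkT⟩ := toFront u T h' hb' v k j hdec
        (fun e he => ⟨(hpre e he).2, (hpre e he).1⟩) o1 o2
      have e1 : S.ρ ⟨h' + 1, hb'⟩ = k := by rw [hρ]; exact hjT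
      have e2 : S.ρ ⟨h', Nat.lt_of_succ_lt hb'⟩ = j := by rw [hρ]; exact hkT
      have q1 := S.ρ.injective (e1.trans hkd)
      have q2 := S.ρ.injective (e2.trans hjd)
      simp only [Fin.mk.injEq] at q1 q2
      omega

lemma bump_symm {Λ Λ' : Tableau L} {j k : L} (h : Bump Λ Λ' j k) : Bump Λ Λ' k j := by
  obtain ⟨ne, hj, hk, ho, hρ⟩ := h
  exact ⟨ne.symm, hk, hj, fun i h1 h2 => ho i h2 h1, by rw [hρ, Equiv.swap_comm]⟩

lemma tableau_ext {A B : Tableau L} (h1 : A.ρ = B.ρ) (h2 : A.row = B.row) : A = B := by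
  cases A; cases B; cases h1; cases h2; rfl

lemma bump_unique {Λ Λ₁ Λ₂ : Tableau L} {j k : L} (b1 : Bump Λ Λ₁ j k)
    (b2 : Bump Λ Λ₂ j k) : Λ₁ = Λ₂ := by
  obtain ⟨ne, ⟨r1, hr1, hr1'⟩, ⟨s1, hs1, hs1'⟩, ho1, hρ1⟩ := b1
  obtain ⟨-, ⟨r2, hr2, hr2'⟩, ⟨s2, hs2, hs2'⟩, ho2, hρ2⟩ := b2
  apply tableau_ext (hρ1.trans hρ2.symm)
  funext i
  by_cases hij : i = j
  · subst hij
    have hr : r1 = r2 := by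
      rw [hr1] at hr2
      injection hr2
    rw [hr1', hr2', hr]
  · by_cases hik : i = k
    · subst hik
      have hs : s1 = s2 := by
        rw [hs1] at hs2
        injection hs2
      rw [hs1', hs2', hs]
    · rw [ho1 i hij hik, ho2 i hij hik]

lemma bump_step_aux (R : SwapPair L) (j k : L) (u : List ℕ) (h : ℕ) (v : List ℕ)
    (hbh : h + 1 < Fintype.card L)
    (hdec : R.toPre.hs = u ++ h :: v)
    (hpre : ∀ e ∈ R.toPre.inc.take u.length, ¬ Inv e j ∧ ¬ Inv e k)
    (o1 : R.toPre.ρ ((u.map (adjSwap (Fintype.card L))).prod ⟨h + 1, hbh⟩) = j)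
    (o2 : R.toPre.ρ ((u.map (adjSwap (Fintype.card L))).prod
      ⟨h, Nat.lt_of_succ_lt hbh⟩) = k) :
    ∃ R' : SwapPair L, SwapEquiv R R' ∧ Bump (assocTableau R) (assocTableau R') j k := by
  obtain ⟨T, eqvT, hρT, hhsT, hjT, hkT⟩ := toFront u R.toPre h hbh v j k hdec hpre o1 o2
  have hprodT : prodMap T = 1 := by
    rw [← eqv_prod eqvT]
    exact R.prod_eq_one
  set P₁ := T.toSwap hprodT with hP₁
  have eqvRP₁ : SwapEquiv R P₁ := eqv_swapEquiv eqvT R.prod_eq_one hprodT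
  have hP₁h : P₁.heights = h :: (u ++ v) := hhsT
  obtain ⟨hb2, hbmp⟩ := shift_bump P₁ (shift P₁) h (u ++ v) hP₁h
    (shift_of P₁ hP₁h).1 (shift_of P₁ hP₁h).2
  have hjP : P₁.ρ ⟨h + 1, hb2⟩ = j := by
    rw [show P₁.ρ = R.ρ from hρT]
    exact hjT
  have hkP : P₁.ρ ⟨h, Nat.lt_of_succ_lt hb2⟩ = k := by
    rw [show P₁.ρ = R.ρ from hρT]
    exact hkT
  have hassoc : assocTableau P₁ = assocTableau R := by
    rw [assoc_eq, assoc_eq]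
    show Pre.tab T = Pre.tab R.toPre
    have hl : T.loc = R.toPre.loc := funext fun i => (eqv_loc eqvT i).symm
    unfold Pre.tab
    rw [hρT, hl]
  refine ⟨shift P₁, Relation.EqvGen.trans _ _ _ eqvRP₁ (Relation.EqvGen.rel _ _
    (Or.inl ⟨h, u ++ v, hP₁h, (shift_of P₁ hP₁h).1, (shift_of P₁ hP₁h).2⟩)), ?_⟩
  rw [← hassoc, ← hjP, ← hkP]
  exact hbmp

lemma bump_step (R : SwapPair L) (Λ : Tableau L) (hb : BumpStep (assocTableau R) Λ) :
    ∃ R' : SwapPair L, SwapEquiv R R' ∧ assocTableau R' = Λ := by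
  obtain ⟨j, k, hbump⟩ := hb
  have hTj : ∃ r, R.toPre.loc j = k :: r := by
    obtain ⟨-, ⟨r, h1, -⟩, -⟩ := hbump
    exact ⟨r, by rw [← localSeq_eq R j]; exact h1⟩
  have hTk : ∃ r, R.toPre.loc k = j :: r := by
    obtain ⟨-, -, ⟨r, h1, -⟩, -⟩ := hbump
    exact ⟨r, by rw [← localSeq_eq R k]; exact h1⟩
  obtain ⟨u, h, v, hbh, hdec, hpre, horient⟩ := loc_first R.toPre.hs R.toPre j k rfl hTj hTk
  rcases horient with ⟨o1, o2⟩ | ⟨o1, o2⟩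
  · obtain ⟨R', eqvR', bmp⟩ := bump_step_aux R j k u h v hbh hdec hpre o1 o2
    exact ⟨R', eqvR', bump_unique bmp hbump⟩
  · obtain ⟨R', eqvR', bmp⟩ := bump_step_aux R k j u h v hbh hdec
      (fun e he => ⟨(hpre e he).2, (hpre e he).1⟩) o1 o2
    exact ⟨R', eqvR', bump_unique bmp (bump_symm hbump)⟩

lemma backward (P Q : SwapPair L)
    (h : Relation.ReflTransGen BumpStep (assocTableau P) (assocTableau Q)) :
    SwapEquiv P Q := by
  have main : ∀ Λ, Relation.ReflTransGen BumpStep (assocTableau P) Λ →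
      ∃ P' : SwapPair L, SwapEquiv P P' ∧ assocTableau P' = Λ := by
    intro Λ hΛ
    induction hΛ with
    | refl => exact ⟨P, Relation.EqvGen.refl P, rfl⟩
    | tail hab hbc ih =>
      obtain ⟨P', e1, rfl⟩ := ih
      obtain ⟨P'', e2, h2⟩ := bump_step P' _ hbc
      exact ⟨P'', Relation.EqvGen.trans _ _ _ e1 e2, h2⟩
  obtain ⟨P', e1, hP'⟩ := main _ h
  have hρ : P'.toPre.ρ = Q.toPre.ρ := congrArg Tableau.ρ hP'
  have hloc : ∀ i, P'.toPre.loc i = Q.toPre.loc i := by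
    intro i
    have h2 := congrArg (fun Λ : Tableau L => Λ.row i) hP'
    rw [← localSeq_eq P' i, ← localSeq_eq Q i]
    exact h2
  have := tab_eq P'.toPre.hs P'.toPre Q.toPre rfl hρ hloc
  exact Relation.EqvGen.trans _ _ _ e1 (eqv_swapEquiv this P'.prod_eq_one Q.prod_eq_one)

end S15


/-- Remark 4 of the paper.  Two tableaux are tableau
representations of the same combinatorial type if and only if one can be
obtained from the other by a finite sequence of bumps. -/
theorem statement15 {L : Type*} [Fintype L] (P Q : RealBody.SwapPair L) :
    RealBody.SwapEquiv P Q ↔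
      Relation.ReflTransGen RealBody.BumpStep
        (RealBody.assocTableau P) (RealBody.assocTableau Q) :=
  ⟨S15.forward, S15.backward P Q⟩
end
end

section
/- If h : S¹ → ℝ is C²-smooth and h(θ) + h''(θ) > 0 for all θ ∈ S¹, then h is the support function of a compact convex body A in the plane ℝ²; that is, there exists a compact convex set A ⊂ ℝ² with max_{p∈A} ⟨θ,p⟩ = h(θ) for all θ ∈ S¹, and A is bounded by a curve whose curvature at the boundary point with outward unit normal θ equals 1/(h(θ)+h''(θ)). -/
/- Common framework: arrangements of convex bodies in the plane, dual support
systems on the cylinder, swap pairs and combinatorial types, following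
Dobbins–Holmsen–Hubard, "Realization spaces of arrangements of convex bodies". -/

open scoped Classical

noncomputable section

open Real Filter Set

namespace S16

theorem sin_sub_deriv (θ x : ℝ) :
    HasDerivAt (fun x : ℝ => Real.sin (x - θ)) (Real.cos (x - θ)) x := by
  have h1 : HasDerivAt (fun x : ℝ => x - θ) 1 x := (hasDerivAt_id x).sub_const θ
  simpa using h1.sin

theorem cos_sub_deriv (θ x : ℝ) :
    HasDerivAt (fun x : ℝ => Real.cos (x - θ)) (-Real.sin (x - θ)) x := by
  have h1 : HasDerivAt (fun x : ℝ => x - θ) 1 x := (hasDerivAt_id x).sub_const θ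
  simpa using h1.cos

theorem aux_tendsto (θ : ℝ) (G G1 : ℝ → ℝ) (hG : ∀ x, HasDerivAt G (G1 x) x)
    (hGθ : G θ = 0) (hG1θ : G1 θ = 0) :
    Tendsto (fun x => G x / Real.sin (x - θ)) (nhdsWithin θ {θ}ᶜ) (nhds 0) := by
  have h1 : Tendsto (fun x => G x / (x - θ)) (nhdsWithin θ {θ}ᶜ) (nhds 0) := by
    have h := hasDerivAt_iff_tendsto_slope.mp (hG θ)
    rw [hG1θ] at h
    refine h.congr fun x => ?_
    rw [slope_def_field, hGθ, sub_zero]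
  have h2 : Tendsto (fun x => Real.sin (x - θ) / (x - θ)) (nhdsWithin θ {θ}ᶜ) (nhds 1) := by
    have h := hasDerivAt_iff_tendsto_slope.mp (sin_sub_deriv θ θ)
    rw [show Real.cos (θ - θ) = 1 by simp] at h
    refine h.congr fun x => ?_
    rw [slope_def_field, sub_self, Real.sin_zero, sub_zero]
  have h3 : Tendsto (fun x => (x - θ) / Real.sin (x - θ)) (nhdsWithin θ {θ}ᶜ) (nhds 1) := by
    have h := h2.inv₀ one_ne_zero
    simpa [inv_div] using h
  have h4 := h1.mul h3
  rw [zero_mul] at h4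
  refine h4.congr' ?_
  filter_upwards [self_mem_nhdsWithin] with x hx
  have hxθ : x - θ ≠ 0 := sub_ne_zero.mpr hx
  rw [div_mul_div_comm, mul_comm (x - θ) (Real.sin (x - θ)), mul_div_mul_right _ _ hxθ]

theorem aux_nonneg (θ : ℝ) (G G1 G2 : ℝ → ℝ)
    (hG : ∀ x, HasDerivAt G (G1 x) x) (hG1 : ∀ x, HasDerivAt G1 (G2 x) x)
    (hGθ : G θ = 0) (hG1θ : G1 θ = 0) (hpos : ∀ x, 0 < G x + G2 x) :
    ∀ φ ∈ Set.Icc θ (θ + Real.pi), 0 ≤ G φ := by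
  set w : ℝ → ℝ := fun x => G1 x * Real.sin (x - θ) - G x * Real.cos (x - θ) with hw_def
  have hw : ∀ x, HasDerivAt w ((G x + G2 x) * Real.sin (x - θ)) x := by
    intro x
    have h := ((hG1 x).mul (sin_sub_deriv θ x)).sub ((hG x).mul (cos_sub_deriv θ x))
    exact h.congr_deriv (by ring)
  have hwθ : w θ = 0 := by simp [hw_def, hGθ, hG1θ]
  have hwcont : Continuous w := continuous_iff_continuousAt.mpr fun x => (hw x).continuousAt
  have hGcont : Continuous G := continuous_iff_continuousAt.mpr fun x => (hG x).continuousAt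
  have hwmono : MonotoneOn w (Set.Icc θ (θ + Real.pi)) := by
    apply monotoneOn_of_deriv_nonneg (convex_Icc _ _) hwcont.continuousOn
      (fun x _ => ((hw x).differentiableAt).differentiableWithinAt)
    intro x hx
    rw [interior_Icc, mem_Ioo] at hx
    rw [(hw x).deriv]
    exact mul_nonneg (hpos x).le
      (Real.sin_nonneg_of_nonneg_of_le_pi (by linarith) (by linarith))
  have hwpos : ∀ x ∈ Set.Icc θ (θ + Real.pi), 0 ≤ w x := by
    intro x hx
    have := hwmono (left_mem_Icc.mpr (by linarith [Real.pi_pos])) hx hx.1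
    linarith [hwθ.symm ▸ this]
  intro φ hφ
  rcases eq_or_lt_of_le hφ.2 with hend | hlt
  · have : w φ = G φ := by
      rw [hw_def]
      simp only [hend]
      rw [show θ + Real.pi - θ = Real.pi by ring]
      simp
    rw [← this]; exact hwpos φ hφ
  rcases eq_or_lt_of_le hφ.1 with hbeg | hgt
  · rw [← hbeg, hGθ]
  have hsinφ : 0 < Real.sin (φ - θ) := Real.sin_pos_of_pos_of_lt_pi (by linarith) (by linarith)
  have hqmono : MonotoneOn (fun x => G x / Real.sin (x - θ)) (Set.Ioo θ (θ + Real.pi)) := by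
    apply monotoneOn_of_deriv_nonneg (convex_Ioo _ _)
    · apply ContinuousOn.div hGcont.continuousOn
        (Continuous.continuousOn (by continuity))
      intro x hx
      exact (Real.sin_pos_of_pos_of_lt_pi (by linarith [hx.1]) (by linarith [hx.2])).ne'
    · rw [interior_Ioo]
      intro x hx
      have hsx : Real.sin (x - θ) ≠ 0 :=
        (Real.sin_pos_of_pos_of_lt_pi (by linarith [hx.1]) (by linarith [hx.2])).ne'
      exact ((hG x).div (sin_sub_deriv θ x) hsx).differentiableAt.differentiableWithinAt
    · rw [interior_Ioo]
      intro x hx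
      have hsx : 0 < Real.sin (x - θ) :=
        Real.sin_pos_of_pos_of_lt_pi (by linarith [hx.1]) (by linarith [hx.2])
      rw [show deriv (fun x => G x / Real.sin (x - θ)) x = _ from
        ((hG x).div (sin_sub_deriv θ x) hsx.ne').deriv]
      apply div_nonneg _ (sq_nonneg _)
      have h9 := hwpos x ⟨hx.1.le, hx.2.le⟩
      simp only [hw_def] at h9
      linarith
  have hqnonneg : ∀ x ∈ Set.Ioo θ (θ + Real.pi), 0 ≤ G x / Real.sin (x - θ) := by
    intro x hx
    have T : Tendsto (fun y => G y / Real.sin (y - θ)) (nhdsWithin θ (Set.Ioi θ)) (nhds 0) :=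
      (aux_tendsto θ G G1 hG hGθ hG1θ).mono_left
        (nhdsWithin_mono θ fun y hy => ne_of_gt hy)
    refine le_of_tendsto T ?_
    filter_upwards [Ioo_mem_nhdsGT_of_mem (Set.left_mem_Ico.mpr hx.1)] with y hy
    simpa using hqmono ⟨hy.1, lt_trans hy.2 hx.2⟩ hx (le_of_lt hy.2)
  have := hqnonneg φ ⟨hgt, hlt⟩
  have h2 : G φ = (G φ / Real.sin (φ - θ)) * Real.sin (φ - θ) :=
    (div_mul_cancel₀ _ hsinφ.ne').symm
  rw [h2]
  exact mul_nonneg this hsinφ.le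

/-! ### The function `G θ φ = h φ - ⟨γ θ, u φ⟩` -/

variable (h h1 h2 : ℝ → ℝ)

noncomputable def Gg (θ φ : ℝ) : ℝ :=
  h φ - ((h θ * Real.cos θ - h1 θ * Real.sin θ) * Real.cos φ +
    (h θ * Real.sin θ + h1 θ * Real.cos θ) * Real.sin φ)

noncomputable def Gg1 (θ φ : ℝ) : ℝ :=
  h1 φ + (h θ * Real.cos θ - h1 θ * Real.sin θ) * Real.sin φ -
    (h θ * Real.sin θ + h1 θ * Real.cos θ) * Real.cos φ

noncomputable def Gg2 (θ φ : ℝ) : ℝ :=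
  h2 φ + (h θ * Real.cos θ - h1 θ * Real.sin θ) * Real.cos φ +
    (h θ * Real.sin θ + h1 θ * Real.cos θ) * Real.sin φ

variable (d1 : ∀ x, HasDerivAt h (h1 x) x) (d2 : ∀ x, HasDerivAt h1 (h2 x) x)

theorem Gg_self (θ : ℝ) : Gg h h1 θ θ = 0 := by
  have pyth := Real.sin_sq_add_cos_sq θ
  unfold Gg
  linear_combination (-(h θ)) * pyth

theorem Gg1_self (θ : ℝ) : Gg1 h h1 θ θ = 0 := by
  have pyth := Real.sin_sq_add_cos_sq θ
  unfold Gg1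
  linear_combination (-(h1 θ)) * pyth

include d1 in
theorem Gg_hasDeriv (θ x : ℝ) : HasDerivAt (Gg h h1 θ) (Gg1 h h1 θ x) x := by
  have hc := Real.hasDerivAt_cos x
  have hs := Real.hasDerivAt_sin x
  have := (d1 x).sub
    (((hasDerivAt_const x (h θ * Real.cos θ - h1 θ * Real.sin θ)).mul hc).add
      ((hasDerivAt_const x (h θ * Real.sin θ + h1 θ * Real.cos θ)).mul hs))
  exact this.congr_deriv (by unfold Gg1; ring)

include d2 in
theorem Gg1_hasDeriv (θ x : ℝ) : HasDerivAt (Gg1 h h1 θ) (Gg2 h h1 h2 θ x) x := by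
  have hc := Real.hasDerivAt_cos x
  have hs := Real.hasDerivAt_sin x
  have := ((d2 x).add
      ((hasDerivAt_const x (h θ * Real.cos θ - h1 θ * Real.sin θ)).mul hs)).sub
    ((hasDerivAt_const x (h θ * Real.sin θ + h1 θ * Real.cos θ)).mul hc)
  exact this.congr_deriv (by unfold Gg2; ring)

include d1 d2 in
theorem Gg_nonneg (hper : ∀ x, h (x + 2 * Real.pi) = h x)
    (hpos : ∀ x, 0 < h x + h2 x) (θ φ : ℝ) : 0 ≤ Gg h h1 θ φ := by
  have pi_pos := Real.pi_pos
  have gpos : ∀ x, 0 < Gg h h1 θ x + Gg2 h h1 h2 θ x := by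
    intro x
    have := hpos x
    unfold Gg Gg2
    linarith
  have hGper : Function.Periodic (Gg h h1 θ) (2 * Real.pi) := by
    intro x
    unfold Gg
    rw [hper x, Real.cos_add_two_pi, Real.sin_add_two_pi]
  set ψ := toIcoMod Real.two_pi_pos (θ - Real.pi) φ with hψ
  have hmem := toIcoMod_mem_Ico Real.two_pi_pos (θ - Real.pi) φ
  have heq : Gg h h1 θ ψ = Gg h h1 θ φ := by
    rw [hψ, toIcoMod]
    exact hGper.sub_zsmul_eq _
  rw [← heq]
  rcases le_or_gt θ ψ with hle | hlt
  · exact aux_nonneg θ _ _ _ (Gg_hasDeriv h h1 d1 θ) (Gg1_hasDeriv h h1 h2 d2 θ)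
      (Gg_self h h1 θ) (Gg1_self h h1 θ) gpos ψ ⟨hle, by linarith [hmem.2]⟩
  · have hneg : ∀ x : ℝ, HasDerivAt (fun x : ℝ => 2 * θ - x) (-1) x := fun x =>
      (hasDerivAt_id x).const_sub (2 * θ)
    have key := aux_nonneg θ (fun x => Gg h h1 θ (2 * θ - x))
        (fun x => -Gg1 h h1 θ (2 * θ - x)) (fun x => Gg2 h h1 h2 θ (2 * θ - x))
        (fun x => by
          have := (Gg_hasDeriv h h1 d1 θ (2 * θ - x)).comp x (hneg x)
          exact this.congr_deriv (by ring))
        (fun x => by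
          have := ((Gg1_hasDeriv h h1 h2 d2 θ (2 * θ - x)).comp x (hneg x)).neg
          exact this.congr_deriv (by ring))
        (by simpa [show 2 * θ - θ = θ by ring] using Gg_self h h1 θ)
        (by simpa [show 2 * θ - θ = θ by ring] using Gg1_self h h1 θ)
        (fun x => gpos (2 * θ - x))
        (2 * θ - ψ) ⟨by linarith, by linarith [hmem.1]⟩
    simpa [show 2 * θ - (2 * θ - ψ) = ψ by ring] using key

include d1 in
theorem Gg_tendsto (θ : ℝ) :
    Tendsto (fun x => Gg h h1 θ x / Real.sin (x - θ)) (nhdsWithin θ {θ}ᶜ) (nhds 0) :=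
  aux_tendsto θ _ _ (Gg_hasDeriv h h1 d1 θ) (Gg_self h h1 θ) (Gg1_self h h1 θ)

theorem mul_le_abs' (a c : ℝ) (hc : |c| ≤ 1) : a * c ≤ |a| :=
  calc a * c ≤ |a * c| := le_abs_self _
    _ = |a| * |c| := abs_mul _ _
    _ ≤ |a| * 1 := mul_le_mul_of_nonneg_left hc (abs_nonneg _)
    _ = |a| := mul_one _

end S16

/-- Blaschke; Remark 1 of the paper.  If `h : S¹ → ℝ`
(viewed as a `2π`-periodic function on `ℝ`) is `C²`-smooth and `h + h'' > 0`,
then `h` is the support function of a compact convex body `A` in the plane,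
whose boundary is the curve `γ(θ) = h(θ)·(cos θ, sin θ) + h'(θ)·(-sin θ, cos θ)`
(the boundary point with outward unit normal `θ`); the curvature of the
boundary at `γ(θ)` equals `1/(h(θ) + h''(θ))`, which is expressed by the
velocity identity `γ'(θ) = (h(θ) + h''(θ)) · (-sin θ, cos θ)` (unit tangent,
normal turning at speed `1` per unit of arclength times `h + h''`). -/

theorem statement16 (h : ℝ → ℝ) (hper : ∀ θ, h (θ + 2 * Real.pi) = h θ)
    (hsm : ContDiff ℝ 2 h) (hpos : ∀ θ, 0 < h θ + deriv (deriv h) θ) :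
    ∃ A : Set (ℝ × ℝ), IsCompact A ∧ Convex ℝ A ∧ A.Nonempty ∧
      (∀ θ, RealBody.suppFn A θ = h θ) ∧
      frontier A = Set.range (fun θ : ℝ =>
        ((h θ * Real.cos θ - deriv h θ * Real.sin θ,
          h θ * Real.sin θ + deriv h θ * Real.cos θ) : ℝ × ℝ)) ∧
      ∀ θ : ℝ, HasDerivAt (fun θ : ℝ =>
          ((h θ * Real.cos θ - deriv h θ * Real.sin θ,
            h θ * Real.sin θ + deriv h θ * Real.cos θ) : ℝ × ℝ))
        ((h θ + deriv (deriv h) θ) • ((-Real.sin θ, Real.cos θ) : ℝ × ℝ)) θ := by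
  have pi_pos := Real.pi_pos
  have hdiff : Differentiable ℝ h := hsm.differentiable (by norm_num)
  have hd' : ContDiff ℝ 1 (deriv h) := by
    rw [show (2 : WithTop ℕ∞) = 1 + 1 by norm_num] at hsm
    exact (contDiff_succ_iff_deriv.mp hsm).2.2
  have hdiff1 : Differentiable ℝ (deriv h) := hd'.differentiable one_ne_zero
  have d1 : ∀ x, HasDerivAt h (deriv h x) x := fun x => (hdiff x).hasDerivAt
  have d2 : ∀ x, HasDerivAt (deriv h) (deriv (deriv h) x) x := fun x => (hdiff1 x).hasDerivAt
  set γ : ℝ → ℝ × ℝ := fun θ : ℝ =>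
    ((h θ * Real.cos θ - deriv h θ * Real.sin θ,
      h θ * Real.sin θ + deriv h θ * Real.cos θ) : ℝ × ℝ) with hγ
  set A : Set (ℝ × ℝ) :=
    {p : ℝ × ℝ | ∀ φ : ℝ, p.1 * Real.cos φ + p.2 * Real.sin φ ≤ h φ} with hA
  have hGeq : ∀ θ φ, S16.Gg h (deriv h) θ φ
      = h φ - ((γ θ).1 * Real.cos φ + (γ θ).2 * Real.sin φ) := fun θ φ => rfl
  have gmem : ∀ θ, γ θ ∈ A := by
    intro θ
    simp only [hA, Set.mem_setOf_eq]
    intro φ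
    have hnn := S16.Gg_nonneg h (deriv h) (deriv (deriv h)) d1 d2 hper hpos θ φ
    rw [hGeq] at hnn
    simp only [hγ] at hnn
    linarith
  have gtouch : ∀ θ, (γ θ).1 * Real.cos θ + (γ θ).2 * Real.sin θ = h θ := by
    intro θ
    have pyth := Real.sin_sq_add_cos_sq θ
    simp only [hγ]
    linear_combination (h θ) * pyth
  have uniq : ∀ p : ℝ × ℝ, (∀ φ, p.1 * Real.cos φ + p.2 * Real.sin φ ≤ h φ) →
      ∀ θ, p.1 * Real.cos θ + p.2 * Real.sin θ = h θ → p = γ θ := by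
    intro p hp θ heq
    have pyth := Real.sin_sq_add_cos_sq θ
    have touch := gtouch θ
    set t : ℝ := -(p.1 - (γ θ).1) * Real.sin θ + (p.2 - (γ θ).2) * Real.cos θ with ht
    have e : (p.1 - (γ θ).1) * Real.cos θ + (p.2 - (γ θ).2) * Real.sin θ = 0 := by
      linear_combination heq - touch
    have hu : p.1 - (γ θ).1 = -t * Real.sin θ := by
      rw [ht]; linear_combination (Real.cos θ) * e - (p.1 - (γ θ).1) * pyth
    have hv : p.2 - (γ θ).2 = t * Real.cos θ := by
      rw [ht]; linear_combination (Real.sin θ) * e - (p.2 - (γ θ).2) * pyth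
    have key : ∀ φ, t * Real.sin (φ - θ) ≤ S16.Gg h (deriv h) θ φ := by
      intro φ
      rw [hGeq]
      have h5 := hp φ
      have expand : t * Real.sin (φ - θ) =
          (p.1 * Real.cos φ + p.2 * Real.sin φ)
            - ((γ θ).1 * Real.cos φ + (γ θ).2 * Real.sin φ) := by
        rw [Real.sin_sub]
        linear_combination (-(Real.cos φ)) * hu - (Real.sin φ) * hv
      linarith
    have T := S16.Gg_tendsto h (deriv h) d1 θ
    have hsub1 : Set.Ioi θ ⊆ ({θ}ᶜ : Set ℝ) := fun y hy => by
      simp only [Set.mem_compl_iff, Set.mem_singleton_iff]; exact ne_of_gt hy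
    have hsub2 : Set.Iio θ ⊆ ({θ}ᶜ : Set ℝ) := fun y hy => by
      simp only [Set.mem_compl_iff, Set.mem_singleton_iff]; exact ne_of_lt hy
    have tle : t ≤ 0 := by
      refine ge_of_tendsto (T.mono_left (nhdsWithin_mono θ hsub1)) ?_
      filter_upwards [Ioo_mem_nhdsGT_of_mem
        (Set.left_mem_Ico.mpr (by linarith : θ < θ + Real.pi))] with y hy
      have hs : 0 < Real.sin (y - θ) :=
        Real.sin_pos_of_pos_of_lt_pi (by linarith [hy.1]) (by linarith [hy.2])
      rw [le_div_iff₀ hs]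
      exact key y
    have tge : 0 ≤ t := by
      refine le_of_tendsto (T.mono_left (nhdsWithin_mono θ hsub2)) ?_
      filter_upwards [Ioo_mem_nhdsLT_of_mem
        (⟨by linarith, le_rfl⟩ : θ ∈ Set.Ioc (θ - Real.pi) θ)] with y hy
      have hs : Real.sin (y - θ) < 0 := by
        have := Real.sin_pos_of_pos_of_lt_pi (x := θ - y) (by linarith [hy.2]) (by linarith [hy.1])
        rw [show θ - y = -(y - θ) by ring, Real.sin_neg] at this
        linarith
      rw [div_le_iff_of_neg hs]
      exact key y
    have ht0 : t = 0 := le_antisymm tle tge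
    rw [ht0] at hu hv
    have r1 : (γ θ).1 = h θ * Real.cos θ - deriv h θ * Real.sin θ := rfl
    have r2 : (γ θ).2 = h θ * Real.sin θ + deriv h θ * Real.cos θ := rfl
    apply Prod.ext
    · rw [r1]
      simp only [neg_mul, zero_mul, neg_zero] at hu
      linarith
    · rw [r2]
      simp only [zero_mul] at hv
      linarith
  have hclosed : IsClosed A := by
    have hrw : A = ⋂ φ : ℝ, {p : ℝ × ℝ | p.1 * Real.cos φ + p.2 * Real.sin φ ≤ h φ} := by
      rw [hA]; ext p; simp [Set.mem_iInter]
    rw [hrw]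
    exact isClosed_iInter fun φ => isClosed_le (by fun_prop) continuous_const
  have hcompact : IsCompact A := by
    apply IsCompact.of_isClosed_subset (isCompact_Icc
      (a := ((-h Real.pi, -h (-(Real.pi/2))) : ℝ × ℝ)) (b := (h 0, h (Real.pi/2)))) hclosed
    intro p hp
    simp only [hA, Set.mem_setOf_eq] at hp
    have h0 := hp 0
    have hπ := hp Real.pi
    have hq := hp (Real.pi/2)
    have hq' := hp (-(Real.pi/2))
    simp [Real.cos_pi, Real.sin_pi] at h0 hπ hq hq'
    rw [Set.mem_Icc]
    constructor <;> rw [Prod.le_def] <;> constructor <;> simp <;> linarith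
  have hconv : Convex ℝ A := by
    intro p hp q hq a b ha hb hab
    simp only [hA, Set.mem_setOf_eq] at hp hq ⊢
    intro φ
    have h1 := hp φ
    have h2 := hq φ
    have e1 : a * h φ + b * h φ = h φ := by rw [← add_mul, hab, one_mul]
    have e2 := mul_le_mul_of_nonneg_left h1 ha
    have e3 := mul_le_mul_of_nonneg_left h2 hb
    simp only [Prod.fst_add, Prod.snd_add, Prod.smul_fst, Prod.smul_snd, smul_eq_mul]
    nlinarith [e2, e3]
  have hsupp : ∀ θ, RealBody.suppFn A θ = h θ := by
    intro θ
    unfold RealBody.suppFn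
    apply IsGreatest.csSup_eq
    constructor
    · exact ⟨γ θ, gmem θ, gtouch θ⟩
    · rintro y ⟨p, hpA, rfl⟩
      simp only [hA, Set.mem_setOf_eq] at hpA
      exact hpA θ
  have hNotInt : ∀ θ, γ θ ∉ interior A := by
    intro θ hint
    rw [mem_interior_iff_mem_nhds, Metric.mem_nhds_iff] at hint
    obtain ⟨ε, hε, hball⟩ := hint
    have hmem : (((γ θ).1 + (ε/2) * Real.cos θ, (γ θ).2 + (ε/2) * Real.sin θ) : ℝ × ℝ)
        ∈ Metric.ball (γ θ) ε := by
      rw [Metric.mem_ball, Prod.dist_eq]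
      apply max_lt <;>
        [rw [Real.dist_eq, show (γ θ).1 + ε/2 * Real.cos θ - (γ θ).1 = ε/2 * Real.cos θ by ring,
          abs_mul];
         rw [Real.dist_eq, show (γ θ).2 + ε/2 * Real.sin θ - (γ θ).2 = ε/2 * Real.sin θ by ring,
          abs_mul]]
      · calc |ε/2| * |Real.cos θ| ≤ |ε/2| * 1 :=
              mul_le_mul_of_nonneg_left (Real.abs_cos_le_one θ) (abs_nonneg _)
          _ = ε/2 := by rw [mul_one, abs_of_pos (by linarith)]
          _ < ε := by linarith
      · calc |ε/2| * |Real.sin θ| ≤ |ε/2| * 1 :=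
              mul_le_mul_of_nonneg_left (Real.abs_sin_le_one θ) (abs_nonneg _)
          _ = ε/2 := by rw [mul_one, abs_of_pos (by linarith)]
          _ < ε := by linarith
    have hA' := hball hmem
    simp only [hA, Set.mem_setOf_eq] at hA'
    have h6 := hA' θ
    have touch := gtouch θ
    have pyth := Real.sin_sq_add_cos_sq θ
    have e : ((γ θ).1 + ε/2 * Real.cos θ) * Real.cos θ + ((γ θ).2 + ε/2 * Real.sin θ) * Real.sin θ
        = h θ + ε/2 := by linear_combination touch + (ε/2) * pyth
    linarith
  have hMemF : ∀ θ, γ θ ∈ frontier A := by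
    intro θ
    rw [frontier, hclosed.closure_eq]
    exact ⟨gmem θ, hNotInt θ⟩
  have hFsub : frontier A ⊆ Set.range γ := by
    intro p hp
    have hpA : p ∈ A := by
      have := hp.1
      rwa [hclosed.closure_eq] at this
    have hpNI : p ∉ interior A := hp.2
    simp only [hA, Set.mem_setOf_eq] at hpA
    set F : ℝ → ℝ := fun φ => h φ - (p.1 * Real.cos φ + p.2 * Real.sin φ) with hF
    have hFc : ContinuousOn F (Set.Icc 0 (2*Real.pi)) :=
      (hdiff.continuous.sub ((continuous_const.mul Real.continuous_cos).add
        (continuous_const.mul Real.continuous_sin))).continuousOn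
    obtain ⟨θ₀, hθ₀mem, hmin⟩ := (isCompact_Icc (a := (0:ℝ)) (b := 2*Real.pi)).exists_isMinOn
      ⟨0, Set.left_mem_Icc.mpr (by linarith)⟩ hFc
    have hFper : Function.Periodic F (2*Real.pi) := by
      intro φ; simp only [hF]; rw [hper φ, Real.cos_add_two_pi, Real.sin_add_two_pi]
    have hFlb : ∀ φ, F θ₀ ≤ F φ := by
      intro φ
      have hmem2 := toIcoMod_mem_Ico Real.two_pi_pos 0 φ
      have heq2 : F (toIcoMod Real.two_pi_pos 0 φ) = F φ := by
        rw [toIcoMod]; exact hFper.sub_zsmul_eq _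
      rw [← heq2]
      exact isMinOn_iff.mp hmin _ (Set.mem_Icc.mpr ⟨hmem2.1, by linarith [hmem2.2]⟩)
    have hεle : F θ₀ ≤ 0 := by
      by_contra hcon
      push_neg at hcon
      apply hpNI
      have hsub : Metric.ball p (F θ₀ / 2) ⊆ A := by
        intro q hq
        simp only [hA, Set.mem_setOf_eq]
        intro φ
        rw [Metric.mem_ball, Prod.dist_eq, max_lt_iff, Real.dist_eq, Real.dist_eq] at hq
        have b1 : (q.1 - p.1) * Real.cos φ ≤ |q.1 - p.1| :=
          S16.mul_le_abs' _ _ (Real.abs_cos_le_one φ)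
        have b2 : (q.2 - p.2) * Real.sin φ ≤ |q.2 - p.2| :=
          S16.mul_le_abs' _ _ (Real.abs_sin_le_one φ)
        have hlb := hFlb φ
        simp only [hF] at hlb
        linarith [hq.1, hq.2]
      exact (interior_maximal hsub Metric.isOpen_ball) (Metric.mem_ball_self (half_pos hcon))
    have hFnn : 0 ≤ F θ₀ := by
      have := hpA θ₀
      simp only [hF]
      linarith
    have heqF : p.1 * Real.cos θ₀ + p.2 * Real.sin θ₀ = h θ₀ := by
      have hz : F θ₀ = 0 := le_antisymm hεle hFnn
      simp only [hF] at hz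
      linarith
    exact ⟨θ₀, (uniq p hpA θ₀ heqF).symm⟩
  refine ⟨A, hcompact, hconv, ⟨γ 0, gmem 0⟩, hsupp, ?_, ?_⟩
  · exact Set.Subset.antisymm hFsub (by rintro q ⟨θ, rfl⟩; exact hMemF θ)
  · intro θ
    have c1 := ((d1 θ).mul (Real.hasDerivAt_cos θ)).sub ((d2 θ).mul (Real.hasDerivAt_sin θ))
    have c2 := ((d1 θ).mul (Real.hasDerivAt_sin θ)).add ((d2 θ).mul (Real.hasDerivAt_cos θ))
    have hprod := c1.prodMk c2
    refine hprod.congr_deriv ?_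
    simp only [Prod.smul_mk, smul_eq_mul, Prod.mk.injEq]
    constructor <;> ring
end
end
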